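/- arXiv:1103.5640 — 6 statements merged into one kernel-verified Lean document; each statement's English description precedes it below -/
import Mathlib

section
/- For every natural number ν ≥ 1, the integral from 0 to π of ((sin v / v) * exp(v * cot v))^ν with respect to v equals π * ν^ν / ν!. -/
open Real

open MeasureTheory Filter Topology Set intervalIntegral

noncomputable def nbG (n : ℕ) (z : ℂ) : ℂ := ∫ t in (0:ℝ)..1, (Complex.exp (n * z * t) - 1) / t

lemma nb_norm_exp_sub_one_le (w : ℂ) : ‖Complex.exp w - 1‖ ≤ ‖w‖ * Real.exp ‖w‖ := by
  have h : ∀ s ∈ Set.uIcc (0:ℝ) 1, HasDerivAt (fun s : ℝ => Complex.exp (s * w))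
      (w * Complex.exp (s * w)) s := by
    intro s _
    have h1 : HasDerivAt (fun s : ℝ => (s : ℂ) * w) w s := by
      simpa using (Complex.ofRealCLM.hasDerivAt (x := s)).mul_const w
    simpa [mul_comm] using h1.cexp
  have hint : IntervalIntegrable (fun s : ℝ => w * Complex.exp (s * w)) volume 0 1 := by
    apply Continuous.intervalIntegrable
    continuity
  have := integral_eq_sub_of_hasDerivAt h hint
  simp only [Complex.ofReal_one, Complex.ofReal_zero, one_mul, zero_mul, Complex.exp_zero] at this
  rw [show Complex.exp w - 1 = ∫ s in (0:ℝ)..1, w * Complex.exp (s * w) from this.symm]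
  have hb : ∀ s ∈ Set.uIoc (0:ℝ) 1, ‖w * Complex.exp (s * w)‖ ≤ ‖w‖ * Real.exp ‖w‖ := by
    intro s hs
    rw [Set.uIoc_of_le zero_le_one] at hs
    simp only [norm_mul, Complex.norm_exp]
    refine mul_le_mul_of_nonneg_left ?_ (norm_nonneg w)
    apply Real.exp_le_exp.2
    calc (↑s * w).re = s * w.re := by simp
    _ ≤ |s * w.re| := le_abs_self _
    _ = |s| * |w.re| := abs_mul _ _
    _ ≤ 1 * ‖w‖ := by
        apply mul_le_mul (by rw [abs_of_pos hs.1]; exact hs.2) (Complex.abs_re_le_norm w)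
          (abs_nonneg _) zero_le_one
    _ = ‖w‖ := one_mul _
  simpa using norm_integral_le_of_norm_le_const hb


lemma nbG_meas (n : ℕ) (z : ℂ) :
    AEStronglyMeasurable (fun t : ℝ => (Complex.exp (n * z * t) - 1) / t)
      (volume.restrict (Set.uIoc (0:ℝ) 1)) := by
  apply Measurable.aestronglyMeasurable
  have h1 : Measurable fun t : ℝ => Complex.exp (n * z * t) - 1 := by
    fun_prop
  have h2 : Measurable fun t : ℝ => ((t : ℂ))⁻¹ := by fun_prop
  simpa [div_eq_mul_inv, Pi.mul_def] using h1.mul h2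

lemma nbG_bound (n : ℕ) (z : ℂ) {t : ℝ} (ht : t ∈ Set.uIoc (0:ℝ) 1) :
    ‖(Complex.exp (n * z * t) - 1) / t‖ ≤ (n : ℝ) * ‖z‖ * Real.exp ((n:ℝ) * ‖z‖) := by
  rw [Set.uIoc_of_le zero_le_one] at ht
  have ht0 : (0:ℝ) < t := ht.1
  have hw : ‖(n : ℂ) * z * t‖ = (n:ℝ) * ‖z‖ * t := by
    simp [norm_mul, abs_of_pos ht0, mul_comm]
  rw [norm_div, Complex.norm_real, Real.norm_eq_abs, abs_of_pos ht0,
    div_le_iff₀ ht0]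
  calc ‖Complex.exp (↑n * z * ↑t) - 1‖ ≤ ‖(n:ℂ) * z * t‖ * Real.exp ‖(n:ℂ) * z * t‖ :=
        nb_norm_exp_sub_one_le _
  _ = (n:ℝ) * ‖z‖ * t * Real.exp ((n:ℝ) * ‖z‖ * t) := by rw [hw]
  _ ≤ (n:ℝ) * ‖z‖ * t * Real.exp ((n:ℝ) * ‖z‖) := by
      apply mul_le_mul_of_nonneg_left _ (by positivity)
      apply Real.exp_le_exp.2
      calc (n:ℝ) * ‖z‖ * t ≤ (n:ℝ) * ‖z‖ * 1 :=
        mul_le_mul_of_nonneg_left ht.2 (by positivity)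
      _ = (n:ℝ) * ‖z‖ := mul_one _
  _ = (n:ℝ) * ‖z‖ * Real.exp ((n:ℝ) * ‖z‖) * t := by ring

lemma nbG_integrable (n : ℕ) (z : ℂ) :
    IntervalIntegrable (fun t : ℝ => (Complex.exp (n * z * t) - 1) / t) volume 0 1 := by
  rw [intervalIntegrable_iff, Set.uIoc_of_le zero_le_one]
  have hmeas := nbG_meas n z
  rw [Set.uIoc_of_le zero_le_one] at hmeas
  apply Integrable.mono' (g := fun _ : ℝ => (n : ℝ) * ‖z‖ * Real.exp ((n:ℝ) * ‖z‖))
    (integrable_const _) hmeas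
  filter_upwards [ae_restrict_mem measurableSet_Ioc] with t ht
  exact nbG_bound n z (by rwa [Set.uIoc_of_le zero_le_one])

lemma nbG_hasDerivAt (n : ℕ) {z : ℂ} (hz : z ≠ 0) :
    HasDerivAt (nbG n) ((Complex.exp (n * z) - 1) / z) z := by
  have key := intervalIntegral.hasDerivAt_integral_of_dominated_loc_of_deriv_le
    (F := fun (x : ℂ) (t : ℝ) => (Complex.exp (n * x * t) - 1) / t)
    (F' := fun (x : ℂ) (t : ℝ) => (n : ℂ) * Complex.exp (n * x * t))
    (x₀ := z) (a := 0) (b := 1) (μ := volume)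
    (bound := fun _ : ℝ => (n : ℝ) * Real.exp ((n:ℝ) * (‖z‖ + 1)))
    (Metric.ball_mem_nhds z one_pos)
    (Eventually.of_forall fun x => nbG_meas n x)
    (nbG_integrable n z)
    (by
      apply Measurable.aestronglyMeasurable
      fun_prop)
    (by
      filter_upwards with t ht x hx
      rw [Set.uIoc_of_le zero_le_one] at ht
      have : ‖(n:ℂ) * Complex.exp (n * x * t)‖ ≤ (n:ℝ) * Real.exp ((n * x * t).re) := by
        simp [norm_mul, Complex.norm_exp]
      refine this.trans ?_
      apply mul_le_mul_of_nonneg_left _ (by positivity)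
      apply Real.exp_le_exp.2
      have hxa : ‖x‖ ≤ ‖z‖ + 1 := by
        have := mem_ball_iff_norm.1 hx
        have h2 := norm_sub_norm_le x z
        linarith [this, h2]
      calc ((n:ℂ) * x * t).re ≤ |((n:ℂ) * x * t).re| := le_abs_self _
      _ ≤ ‖(n:ℂ) * x * t‖ := Complex.abs_re_le_norm _
      _ = (n:ℝ) * ‖x‖ * |t| := by simp [norm_mul, mul_comm]
      _ ≤ (n:ℝ) * (‖z‖+1) * 1 := by
          apply mul_le_mul _ _ (abs_nonneg _) (by positivity)
          · exact mul_le_mul_of_nonneg_left hxa (by positivity)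
          · rw [abs_of_pos ht.1]; exact ht.2
      _ = (n:ℝ) * (‖z‖+1) := mul_one _)
    (intervalIntegrable_const)
    (by
      filter_upwards with t ht x hx
      rw [Set.uIoc_of_le zero_le_one] at ht
      have ht0 : (t : ℂ) ≠ 0 := by exact_mod_cast ht.1.ne'
      have h1 : HasDerivAt (fun x : ℂ => (n:ℂ) * x * t) ((n:ℂ) * t) x := by
        simpa using ((hasDerivAt_id x).const_mul (n:ℂ)).mul_const (t:ℂ)
      have h3 := (h1.cexp.sub_const 1).div_const (t:ℂ)
      refine h3.congr_deriv ?_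
      rw [mul_div_assoc, mul_div_cancel_right₀ _ ht0]
      ring)
  obtain ⟨-, hD⟩ := key
  have hval : (∫ t in (0:ℝ)..1, (n : ℂ) * Complex.exp (n * z * t))
      = (Complex.exp (n * z) - 1) / z := by
    have hder : ∀ t ∈ Set.uIcc (0:ℝ) 1,
        HasDerivAt (fun t : ℝ => Complex.exp (n * z * t) / z)
          ((n:ℂ) * Complex.exp (n * z * t)) t := by
      intro t _
      have h1 : HasDerivAt (fun t : ℝ => (n:ℂ) * z * t) ((n:ℂ) * z) t := by
        simpa using (Complex.ofRealCLM.hasDerivAt (x := t)).const_mul ((n:ℂ) * z)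
      have h3 := h1.cexp.div_const z
      refine h3.congr_deriv ?_
      rw [mul_div_assoc, mul_div_cancel_right₀ _ hz]
      ring
    have hint : IntervalIntegrable (fun t : ℝ => (n:ℂ) * Complex.exp (n * z * t)) volume 0 1 := by
      apply Continuous.intervalIntegrable
      fun_prop
    have := integral_eq_sub_of_hasDerivAt hder hint
    rw [this]
    push_cast
    rw [mul_one, mul_zero, Complex.exp_zero]
    ring
  rw [hval] at hD
  exact hD


lemma nbG_im (n : ℕ) (z : ℂ) :
    (nbG n z).im = ∫ t in (0:ℝ)..1, Real.exp ((n:ℝ) * z.re * t) * Real.sin ((n:ℝ) * z.im * t) / t := by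
  have := (Complex.imCLM.intervalIntegral_comp_comm (nbG_integrable n z)).symm
  simp only [Complex.imCLM_apply] at this
  rw [nbG, this]
  apply intervalIntegral.integral_congr
  intro t _
  simp only [Complex.imCLM_apply]
  have h1 : ((Complex.exp (n * z * t) - 1) / t).im = (Complex.exp (n * z * t)).im / t := by
    rcases eq_or_ne t 0 with ht | ht
    · simp [ht]
    · rw [Complex.div_ofReal_im, Complex.sub_im]
      simp
  rw [h1, Complex.exp_im]
  have hre : ((n:ℂ) * z * t).re = (n:ℝ) * z.re * t := by simp
  have him : ((n:ℂ) * z * t).im = (n:ℝ) * z.im * t := by simp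
  rw [hre, him]

lemma nbG_im_real (n : ℕ) (x : ℝ) : (nbG n ((x:ℝ) : ℂ)).im = 0 := by
  rw [nbG_im]
  simp

lemma nbG_im_bound (n : ℕ) (hn : 1 ≤ n) {z : ℂ} (hx : z.re ≤ -1) (hy0 : 0 ≤ z.im)
    (hy : z.im ≤ π) : |(nbG n z).im| ≤ π / |z.re| := by
  have hxne : z.re < 0 := lt_of_le_of_lt hx (by norm_num)
  have hn0 : (0:ℝ) < n := by exact_mod_cast hn
  have hnx : (n:ℝ) * z.re < 0 := mul_neg_of_pos_of_neg hn0 hxne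
  rw [nbG_im]
  -- bound pointwise by n * π * exp (n z.re t)
  have hb : ∀ t ∈ Set.uIoc (0:ℝ) 1, ‖Real.exp ((n:ℝ) * z.re * t) * Real.sin ((n:ℝ) * z.im * t) / t‖
      ≤ (n:ℝ) * π * Real.exp ((n:ℝ) * z.re * t) := by
    intro t ht
    rw [Set.uIoc_of_le zero_le_one] at ht
    have ht0 : 0 < t := ht.1
    rw [Real.norm_eq_abs, abs_div, abs_of_pos ht0, div_le_iff₀ ht0, abs_mul,
      Real.abs_exp]
    have hsin : |Real.sin ((n:ℝ) * z.im * t)| ≤ (n:ℝ) * π * t := by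
      refine (Real.abs_sin_le_abs).trans ?_
      rw [abs_of_nonneg (by positivity)]
      have : (n:ℝ) * z.im * t ≤ (n:ℝ) * π * t := by
        apply mul_le_mul_of_nonneg_right _ ht0.le
        exact mul_le_mul_of_nonneg_left hy hn0.le
      linarith
    calc Real.exp ((n:ℝ) * z.re * t) * |Real.sin ((n:ℝ) * z.im * t)|
        ≤ Real.exp ((n:ℝ) * z.re * t) * ((n:ℝ) * π * t) :=
          mul_le_mul_of_nonneg_left hsin (Real.exp_pos _).le
    _ = (n:ℝ) * π * Real.exp ((n:ℝ) * z.re * t) * t := by ring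
  -- the bound function integrates to something ≤ π / |z.re|
  have hbint : IntervalIntegrable (fun t : ℝ => (n:ℝ) * π * Real.exp ((n:ℝ) * z.re * t))
      volume 0 1 := by apply Continuous.intervalIntegrable; fun_prop
  have habs := intervalIntegral.norm_integral_le_of_norm_le
    (f := fun t : ℝ => Real.exp ((n:ℝ) * z.re * t) * Real.sin ((n:ℝ) * z.im * t) / t)
    (g := fun t : ℝ => (n:ℝ) * π * Real.exp ((n:ℝ) * z.re * t))
    (μ := volume) (a := 0) (b := 1)
    zero_le_one (Eventually.of_forall fun t ht => hb t (by rwa [Set.uIoc_of_le zero_le_one])) hbint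
  rw [Real.norm_eq_abs] at habs
  refine habs.trans ?_
  -- compute the integral of the bound
  have hval : (∫ t in (0:ℝ)..1, (n:ℝ) * π * Real.exp ((n:ℝ) * z.re * t))
      = (n:ℝ) * π * ((Real.exp ((n:ℝ) * z.re) - 1) / ((n:ℝ) * z.re)) := by
    rw [intervalIntegral.integral_const_mul]
    congr 1
    have hder : ∀ t ∈ Set.uIcc (0:ℝ) 1,
        HasDerivAt (fun t : ℝ => Real.exp ((n:ℝ) * z.re * t) / ((n:ℝ) * z.re))
          (Real.exp ((n:ℝ) * z.re * t)) t := by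
      intro t _
      have h1 : HasDerivAt (fun t : ℝ => (n:ℝ) * z.re * t) ((n:ℝ) * z.re) t := by
        simpa using (hasDerivAt_id t).const_mul ((n:ℝ) * z.re)
      have h3 := h1.exp.div_const ((n:ℝ) * z.re)
      refine h3.congr_deriv ?_
      rw [mul_div_assoc, div_self hnx.ne, mul_one]
    have hint : IntervalIntegrable (fun t : ℝ => Real.exp ((n:ℝ) * z.re * t)) volume 0 1 := by
      apply Continuous.intervalIntegrable; fun_prop
    have := integral_eq_sub_of_hasDerivAt hder hint
    rw [this, mul_one, mul_zero, Real.exp_zero]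
    ring
  rw [hval]
  have h1 : 0 < 1 - Real.exp ((n:ℝ) * z.re) := by
    have := Real.exp_lt_one_iff.2 hnx
    linarith
  have h2 : Real.exp ((n:ℝ) * z.re) > 0 := Real.exp_pos _
  have habs2 : (n:ℝ) * π * ((Real.exp ((n:ℝ) * z.re) - 1) / ((n:ℝ) * z.re))
      = π * ((1 - Real.exp ((n:ℝ) * z.re)) / (-z.re)) := by
    field_simp [hn0.ne', hxne.ne]
    ring
  have hnegx : (0:ℝ) < -z.re := by linarith
  rw [habs2, abs_of_neg hxne,
    mul_div_assoc' π _ _, div_le_div_iff₀ hnegx hnegx]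
  have : (1 - Real.exp ((n:ℝ) * z.re)) ≤ 1 := by linarith
  nlinarith [mul_le_mul_of_nonneg_right this (mul_nonneg Real.pi_pos.le hnegx.le)]


noncomputable def nbC (n m : ℕ) : ℝ := (n:ℝ)^(n-m) * (Nat.factorial (m-1)) / (Nat.factorial (n-1))

noncomputable def nbc (n : ℕ) : ℝ := (n:ℝ)^(n-1) / (Nat.factorial (n-1))

noncomputable def nbT (n m : ℕ) (z : ℂ) : ℂ := Complex.exp (n * z) * (nbC n m : ℂ) * z ^ (-(m:ℤ))

noncomputable def nbEP (n : ℕ) (z : ℂ) : ℂ := -(1/(n:ℂ)) * ∑ i ∈ Finset.range (n-1), nbT n (i+1) z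

lemma nbC_one (n : ℕ) : nbC n 1 = nbc n := by simp [nbC, nbc]

lemma nbC_self (n : ℕ) (hn : 1 ≤ n) : nbC n n = 1 := by
  have : n - n = 0 := Nat.sub_self n
  rw [nbC, this, pow_zero, one_mul]
  rw [div_self]
  exact_mod_cast (Nat.factorial_pos (n-1)).ne'

lemma nbC_rec (n m : ℕ) (h1 : 1 ≤ m) (h2 : m ≤ n - 1) :
    (m : ℝ) * nbC n m = (n : ℝ) * nbC n (m+1) := by
  have hmn : m + 1 ≤ n := by omega
  have hsub : n - m = (n - (m+1)) + 1 := by omega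
  rw [nbC, nbC, hsub, pow_succ]
  have hfac : (m:ℝ) * (Nat.factorial (m-1)) = (Nat.factorial (m+1-1)) := by
    have : m + 1 - 1 = m := by omega
    rw [this]
    have hm : m = (m - 1) + 1 := by omega
    rw [show (Nat.factorial m : ℝ) = ((m) * Nat.factorial (m-1) : ℕ) from by
      rw [Nat.mul_factorial_pred (by omega)]]
    push_cast
    ring
  have hm1 : m + 1 - 1 = m := by omega
  rw [hm1] at hfac
  field_simp
  rw [hm1]; linear_combination (n:ℝ) * hfac

lemma nbT_hasDerivAt (n m : ℕ) (hm : 1 ≤ m) (hmn : m ≤ n - 1) {z : ℂ} (hz : z ≠ 0) :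
    HasDerivAt (nbT n m) ((n:ℂ) * (nbT n m z - nbT n (m+1) z)) z := by
  have h1 : HasDerivAt (fun z : ℂ => Complex.exp (n * z)) ((n:ℂ) * Complex.exp (n * z)) z := by
    simpa [mul_comm] using ((hasDerivAt_id z).const_mul (n:ℂ)).cexp
  have h2 : HasDerivAt (fun z : ℂ => z ^ (-(m:ℤ))) (((-(m:ℤ)) : ℂ) * z ^ (-(m:ℤ) - 1)) z := by
    exact_mod_cast hasDerivAt_zpow (-(m:ℤ)) z (Or.inl hz)
  have h3 := (h1.mul_const ((nbC n m : ℂ))).mul h2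
  have heq : (n:ℂ) * Complex.exp (n * z) * (nbC n m : ℂ) * z ^ (-(m:ℤ))
      + Complex.exp (n * z) * (nbC n m : ℂ) * ((-(m:ℤ)) * z ^ (-(m:ℤ) - 1))
      = (n:ℂ) * (nbT n m z - nbT n (m+1) z) := by
    have hrec : ((m : ℂ)) * (nbC n m : ℂ) = (n : ℂ) * (nbC n (m+1) : ℂ) := by
      exact_mod_cast congrArg (Complex.ofReal) (nbC_rec n m hm hmn)
    have hzp : z ^ (-(m:ℤ) - 1) = z ^ (-((m+1:ℕ):ℤ)) := by
      congr 1
      push_cast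
      ring
    rw [hzp]
    simp only [nbT]
    linear_combination (-(Complex.exp ((n:ℂ) * z)) * z ^ (-((m+1:ℕ):ℤ))) * hrec
  rw [← heq]
  exact h3

lemma nbEP_hasDerivAt (n : ℕ) (hn : 1 ≤ n) {z : ℂ} (hz : z ≠ 0) :
    HasDerivAt (nbEP n)
      (Complex.exp (n * z) * z ^ (-(n:ℤ)) - (nbc n : ℂ) * Complex.exp (n * z) / z) z := by
  have hsum : HasDerivAt (fun z => ∑ i ∈ Finset.range (n-1), nbT n (i+1) z)
      (∑ i ∈ Finset.range (n-1), (n:ℂ) * (nbT n (i+1) z - nbT n (i+2) z)) z := by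
    apply HasDerivAt.fun_sum
    intro i hi
    have hi' := Finset.mem_range.1 hi
    have := nbT_hasDerivAt n (i+1) (by omega) (by omega) hz
    simpa [show i + 1 + 1 = i + 2 from rfl] using this
  have htel : (∑ i ∈ Finset.range (n-1), (n:ℂ) * (nbT n (i+1) z - nbT n (i+2) z))
      = (n:ℂ) * (nbT n 1 z - nbT n n z) := by
    rw [← Finset.mul_sum]
    congr 1
    have := Finset.sum_range_sub' (f := fun i => nbT n (i+1) z) (n := n-1)
    rw [show ∑ i ∈ Finset.range (n-1), (nbT n (i+1) z - nbT n (i+2) z)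
      = ∑ i ∈ Finset.range (n-1), ((fun i => nbT n (i+1) z) i - (fun i => nbT n (i+1) z) (i+1))
      from rfl, this]
    congr 2
    omega
  rw [htel] at hsum
  have h := hsum.const_mul (-(1/(n:ℂ)))
  have hne : (n:ℂ) ≠ 0 := by
    exact_mod_cast Nat.cast_ne_zero.2 (by omega)
  have : -(1/(n:ℂ)) * ((n:ℂ) * (nbT n 1 z - nbT n n z))
      = Complex.exp (n * z) * z ^ (-(n:ℤ)) - (nbc n : ℂ) * Complex.exp (n * z) / z := by
    rw [nbT, nbT, nbC_one, nbC_self n hn]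
    push_cast
    rw [show z ^ (-1 : ℤ) = z⁻¹ from zpow_neg_one z]
    field_simp
    ring
  rw [this] at h
  exact h

noncomputable def nbΦ (n : ℕ) (z : ℂ) : ℂ := nbEP n z + (nbc n : ℂ) * (nbG n z + Complex.log z)

lemma nbΦ_hasDerivAt (n : ℕ) (hn : 1 ≤ n) {z : ℂ} (hz : z ∈ Complex.slitPlane) :
    HasDerivAt (nbΦ n) (Complex.exp (n * z) * z ^ (-(n:ℤ))) z := by
  have hz0 : z ≠ 0 := Complex.slitPlane_ne_zero hz
  have h1 := nbEP_hasDerivAt n hn hz0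
  have h2 := nbG_hasDerivAt n hz0
  have h3 := Complex.hasDerivAt_log hz
  have h := h1.add ((h2.add h3).const_mul ((nbc n : ℂ)))
  have heq : Complex.exp (↑n * z) * z ^ (-(n:ℤ)) - ↑(nbc n) * Complex.exp (↑n * z) / z +
      ↑(nbc n) * ((Complex.exp (↑n * z) - 1) / z + z⁻¹)
      = Complex.exp (n * z) * z ^ (-(n:ℤ)) := by
    field_simp
    ring
  rw [heq] at h
  exact h


noncomputable def nbζ (v : ℝ) : ℂ := ((v * Real.cos v / Real.sin v : ℝ) : ℂ) + v * Complex.I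

lemma nbζ_re (v : ℝ) : (nbζ v).re = v * Real.cos v / Real.sin v := by
  simp only [nbζ, Complex.add_re, Complex.ofReal_re, Complex.mul_re, Complex.I_re,
    Complex.I_im, Complex.ofReal_im]
  ring

lemma nbζ_im (v : ℝ) : (nbζ v).im = v := by
  simp only [nbζ, Complex.add_im, Complex.ofReal_im, Complex.mul_im, Complex.I_re,
    Complex.I_im, Complex.ofReal_re]
  ring

lemma nbζ_slit {v : ℝ} (hv : v ∈ Ioo 0 π) : nbζ v ∈ Complex.slitPlane := by
  rw [Complex.mem_slitPlane_iff]
  right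
  rw [nbζ_im]
  exact hv.1.ne'

noncomputable def nbζd (v : ℝ) : ℂ :=
  (((Real.cos v - v * Real.sin v) * Real.sin v - v * Real.cos v * Real.cos v) / (Real.sin v)^2 : ℝ)
    + Complex.I

lemma nbζ_hasDerivAt {v : ℝ} (hv : v ∈ Ioo 0 π) : HasDerivAt nbζ (nbζd v) v := by
  have hsin : Real.sin v ≠ 0 := (Real.sin_pos_of_pos_of_lt_pi hv.1 hv.2).ne'
  have h1 : HasDerivAt (fun v : ℝ => v * Real.cos v / Real.sin v)
      (((Real.cos v - v * Real.sin v) * Real.sin v - v * Real.cos v * Real.cos v)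
        / (Real.sin v)^2) v := by
    have hnum : HasDerivAt (fun v : ℝ => v * Real.cos v) (Real.cos v - v * Real.sin v) v := by
      have h := (hasDerivAt_id v).mul (Real.hasDerivAt_cos v)
      refine h.congr_deriv ?_
      show 1 * Real.cos v + v * -Real.sin v = _
      ring
    exact hnum.div (Real.hasDerivAt_sin v) hsin
  have h2 := h1.ofReal_comp
  have h3 : HasDerivAt (fun v : ℝ => (v : ℂ) * Complex.I) Complex.I v := by
    simpa using (Complex.ofRealCLM.hasDerivAt (x := v)).mul_const Complex.I
  exact h2.add h3

lemma nbζd_im (v : ℝ) : (nbζd v).im = 1 := by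
  simp only [nbζd, Complex.add_im, Complex.ofReal_im, Complex.I_im]
  ring

lemma nbF_on_curve (n : ℕ) {v : ℝ} (hv : v ∈ Ioo 0 π) :
    Complex.exp (n * nbζ v) * (nbζ v) ^ (-(n:ℤ))
      = (((Real.sin v / v) * Real.exp (v * Real.cot v)) ^ n : ℝ) := by
  have hsin : 0 < Real.sin v := Real.sin_pos_of_pos_of_lt_pi hv.1 hv.2
  have hv0 : v ≠ 0 := hv.1.ne'
  have hζ : nbζ v = ((v / Real.sin v : ℝ) : ℂ) * Complex.exp (v * Complex.I) := by
    rw [Complex.exp_mul_I, ← Complex.ofReal_cos, ← Complex.ofReal_sin, mul_add, ← mul_assoc,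
      ← Complex.ofReal_mul, ← Complex.ofReal_mul, nbζ]
    congr 2
    · field_simp
    · rw [div_mul_cancel₀ _ hsin.ne']
  have hζne : nbζ v ≠ 0 := Complex.slitPlane_ne_zero (nbζ_slit hv)
  have hexpI : Complex.exp ((v:ℂ) * Complex.I) ≠ 0 := Complex.exp_ne_zero _
  have hexp : Complex.exp (nbζ v) =
      ((Real.exp (v * Real.cos v / Real.sin v) : ℝ) : ℂ) * Complex.exp (v * Complex.I) := by
    rw [nbζ, Complex.exp_add, Complex.ofReal_exp]
  have hbase : Complex.exp (nbζ v) * (nbζ v)⁻¹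
      = (((Real.sin v / v) * Real.exp (v * Real.cot v)) : ℝ) := by
    calc Complex.exp (nbζ v) * (nbζ v)⁻¹
        = ((Real.exp (v * Real.cos v / Real.sin v) : ℝ) : ℂ)
            * ((v / Real.sin v : ℝ) : ℂ)⁻¹
            * (Complex.exp ((v:ℂ) * Complex.I) * (Complex.exp ((v:ℂ) * Complex.I))⁻¹) := by
          rw [hexp, hζ, mul_inv]
          ring
    _ = ((Real.exp (v * Real.cos v / Real.sin v) : ℝ) : ℂ)
            * ((v / Real.sin v : ℝ) : ℂ)⁻¹ := by
          rw [mul_inv_cancel₀ hexpI, mul_one]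
    _ = (((Real.exp (v * Real.cos v / Real.sin v) * (v / Real.sin v)⁻¹ : ℝ)) : ℂ) := by
          push_cast
          ring
    _ = (((Real.sin v / v) * Real.exp (v * Real.cot v)) : ℝ) := by
          rw [Real.cot_eq_cos_div_sin]
          congr 1
          have : v * Real.cos v / Real.sin v = v * (Real.cos v / Real.sin v) := by ring
          rw [this]
          field_simp
  calc Complex.exp (n * nbζ v) * (nbζ v) ^ (-(n:ℤ))
      = (Complex.exp (nbζ v) * (nbζ v)⁻¹) ^ n := by
        rw [mul_pow, ← Complex.exp_nat_mul, inv_pow, ← zpow_natCast (nbζ v), ← zpow_neg]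
  _ = ((((Real.sin v / v) * Real.exp (v * Real.cot v)) : ℝ) : ℂ) ^ n := by rw [hbase]
  _ = (((Real.sin v / v) * Real.exp (v * Real.cot v)) ^ n : ℝ) := by push_cast; rfl


lemma nb_vcot_le_one {v : ℝ} (hv : v ∈ Ioo 0 π) : v * Real.cot v ≤ 1 := by
  have hsin : 0 < Real.sin v := Real.sin_pos_of_pos_of_lt_pi hv.1 hv.2
  rw [Real.cot_eq_cos_div_sin]
  rcases le_or_gt (Real.cos v) 0 with hc | hc
  · have : v * (Real.cos v / Real.sin v) ≤ 0 := by
      apply mul_nonpos_of_nonneg_of_nonpos hv.1.le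
      exact div_nonpos_of_nonpos_of_nonneg hc hsin.le
    calc v * (Real.cos v / Real.sin v) = v * Real.cos v / Real.sin v := by ring
    _ ≤ 0 := by rw [← mul_div_assoc] at this; exact this
    _ ≤ 1 := zero_le_one
  · have hvlt : v < π / 2 := by
      by_contra h
      push_neg at h
      have := Real.cos_nonpos_of_pi_div_two_le_of_le h (by linarith [hv.2, Real.pi_pos])
      linarith
    have htan := Real.lt_tan hv.1 hvlt
    rw [Real.tan_eq_sin_div_cos] at htan
    have h1 : v * Real.cos v < Real.sin v := by
      rw [lt_div_iff₀ hc] at htan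
      linarith
    rw [show v * (Real.cos v / Real.sin v) = v * Real.cos v / Real.sin v from by ring,
      div_le_one hsin]
    linarith

lemma nb_base_mem {v : ℝ} (hv : v ∈ Ioo 0 π) :
    (Real.sin v / v) * Real.exp (v * Real.cot v) ∈ Icc (0:ℝ) (Real.exp 1) := by
  have hsin : 0 < Real.sin v := Real.sin_pos_of_pos_of_lt_pi hv.1 hv.2
  constructor
  · exact mul_nonneg (div_nonneg hsin.le hv.1.le) (Real.exp_pos _).le
  · have h1 : Real.sin v / v ≤ 1 := by
      rw [div_le_one hv.1]
      exact Real.sin_le hv.1.le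
    have h2 : Real.exp (v * Real.cot v) ≤ Real.exp 1 := Real.exp_le_exp.2 (nb_vcot_le_one hv)
    calc (Real.sin v / v) * Real.exp (v * Real.cot v) ≤ 1 * Real.exp 1 :=
        mul_le_mul h1 h2 (Real.exp_pos _).le zero_le_one
    _ = Real.exp 1 := one_mul _

lemma nbf_integrable (n : ℕ) :
    IntervalIntegrable (fun v : ℝ => ((Real.sin v / v) * Real.exp (v * Real.cot v)) ^ n)
      volume 0 π := by
  rw [intervalIntegrable_iff, Set.uIoc_of_le Real.pi_pos.le]
  have hmeas : AEStronglyMeasurable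
      (fun v : ℝ => ((Real.sin v / v) * Real.exp (v * Real.cot v)) ^ n)
      (volume.restrict (Ioc 0 π)) := by
    apply Measurable.aestronglyMeasurable
    have : (fun v : ℝ => ((Real.sin v / v) * Real.exp (v * Real.cot v)) ^ n)
        = fun v : ℝ => ((Real.sin v / v) * Real.exp (v * (Real.cos v / Real.sin v))) ^ n := by
      funext v
      rw [Real.cot_eq_cos_div_sin]
    rw [this]
    fun_prop
  apply Integrable.mono' (g := fun _ : ℝ => (Real.exp 1) ^ n) (integrable_const _) hmeas
  filter_upwards [ae_restrict_mem measurableSet_Ioc] with v hv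
  rcases eq_or_lt_of_le hv.2 with hpi | hlt
  · have : Real.sin v = 0 := by rw [hpi]; exact Real.sin_pi
    rw [Real.norm_eq_abs, this, zero_div, zero_mul]
    rcases Nat.eq_zero_or_pos n with h0 | h0
    · simp [h0]
    · rw [zero_pow h0.ne', abs_zero]
      positivity
  · have hb := nb_base_mem ⟨hv.1, hlt⟩
    rw [Real.norm_eq_abs, abs_pow, abs_of_nonneg hb.1]
    exact pow_le_pow_left₀ hb.1 hb.2 n


lemma nb_tendsto_vcot_zero :
    Tendsto (fun v : ℝ => v * Real.cos v / Real.sin v) (𝓝[>] (0:ℝ)) (𝓝 1) := by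
  have hslope : Tendsto (fun v : ℝ => Real.sin v / v) (𝓝[>] (0:ℝ)) (𝓝 1) := by
    have h := hasDerivAt_iff_tendsto_slope.1 (Real.hasDerivAt_sin 0)
    rw [Real.cos_zero] at h
    have h2 : Tendsto (slope Real.sin 0) (𝓝[>] (0:ℝ)) (𝓝 1) :=
      h.mono_left (nhdsWithin_mono _ (fun x hx => ne_of_gt hx))
    refine h2.congr' ?_
    filter_upwards [self_mem_nhdsWithin] with v _
    simp [slope_def_field]
  have hinv : Tendsto (fun v : ℝ => v / Real.sin v) (𝓝[>] (0:ℝ)) (𝓝 1) := by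
    have := hslope.inv₀ (by norm_num)
    simpa [inv_div] using this
  have hcos : Tendsto (fun v : ℝ => Real.cos v) (𝓝[>] (0:ℝ)) (𝓝 1) := by
    have := Real.continuous_cos.tendsto 0
    rw [Real.cos_zero] at this
    exact this.mono_left nhdsWithin_le_nhds
  have := hcos.mul hinv
  rw [mul_one] at this
  refine this.congr fun v => ?_
  ring

lemma nb_tendsto_zeta_zero : Tendsto nbζ (𝓝[>] (0:ℝ)) (𝓝 1) := by
  have h1 : Tendsto (fun v : ℝ => ((v * Real.cos v / Real.sin v : ℝ) : ℂ)) (𝓝[>] (0:ℝ)) (𝓝 1) := by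
    have h := (Complex.continuous_ofReal.tendsto 1).comp nb_tendsto_vcot_zero
    exact h
  have h2 : Tendsto (fun v : ℝ => (v : ℂ) * Complex.I) (𝓝[>] (0:ℝ)) (𝓝 0) := by
    have h0 : Tendsto (fun v : ℝ => (v : ℂ)) (𝓝[>] (0:ℝ)) (𝓝 0) := by
      have := (Complex.continuous_ofReal.tendsto 0).mono_left (nhdsWithin_le_nhds (s := Ioi 0))
      simpa using this
    simpa using h0.mul_const Complex.I
  have := h1.add h2
  rw [add_zero] at this
  exact this

lemma nb_tendsto_x_atBot :
    Tendsto (fun v : ℝ => v * Real.cos v / Real.sin v) (𝓝[<] π) atBot := by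
  have hA : Tendsto (fun v : ℝ => v * Real.cos v) (𝓝[<] π) (𝓝 (-π)) := by
    have hc : ContinuousAt (fun v : ℝ => v * Real.cos v) π :=
      (continuous_id.mul Real.continuous_cos).continuousAt
    have h := hc.tendsto.mono_left (nhdsWithin_le_nhds (s := Iio π))
    simpa [Real.cos_pi] using h
  have hB : Tendsto (fun v : ℝ => (Real.sin v)⁻¹) (𝓝[<] π) atTop := by
    apply Filter.Tendsto.inv_tendsto_nhdsGT_zero
    rw [tendsto_nhdsWithin_iff]
    constructor
    · have hc : ContinuousAt Real.sin π := Real.continuous_sin.continuousAt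
      have h := hc.tendsto.mono_left (nhdsWithin_le_nhds (s := Iio π))
      simpa [Real.sin_pi] using h
    · filter_upwards [Ioo_mem_nhdsLT_of_mem (right_mem_Ioc.2 Real.pi_pos)] with v hv
      exact Real.sin_pos_of_pos_of_lt_pi hv.1 hv.2
  have := hA.neg_mul_atTop (by linarith [Real.pi_pos] : -π < 0) hB
  refine this.congr fun v => ?_
  rw [div_eq_mul_inv]

lemma nb_tendsto_absζ_atTop : Tendsto (fun v : ℝ => ‖nbζ v‖) (𝓝[<] π) atTop := by
  have habs : Tendsto (fun v : ℝ => |v * Real.cos v / Real.sin v|) (𝓝[<] π) atTop :=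
    tendsto_abs_atBot_atTop.comp nb_tendsto_x_atBot
  apply tendsto_atTop_mono _ habs
  intro v
  rw [← nbζ_re v]
  exact Complex.abs_re_le_norm (nbζ v)

lemma nb_tendsto_arg_pi : Tendsto (fun v : ℝ => Complex.arg (nbζ v)) (𝓝[<] π) (𝓝 π) := by
  have hratio : Tendsto (fun v : ℝ => (-(nbζ v)).im / ‖nbζ v‖) (𝓝[<] π) (𝓝 0) := by
    have hnum : Tendsto (fun v : ℝ => (-(nbζ v)).im) (𝓝[<] π) (𝓝 (-π)) := by
      have : Tendsto (fun v : ℝ => -v) (𝓝[<] π) (𝓝 (-π)) :=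
        (tendsto_id.neg).mono_left (nhdsWithin_le_nhds (s := Iio π))
      refine this.congr fun v => ?_
      rw [Complex.neg_im, nbζ_im]
    exact hnum.div_atTop nb_tendsto_absζ_atTop
  have harcsin : Tendsto (fun v : ℝ => Real.arcsin ((-(nbζ v)).im / ‖nbζ v‖))
      (𝓝[<] π) (𝓝 0) := by
    have := (Real.continuous_arcsin.tendsto 0).comp hratio
    simpa [Function.comp_def] using this
  have hev : ∀ᶠ v in 𝓝[<] π, Real.arcsin ((-(nbζ v)).im / ‖nbζ v‖) + π
      = Complex.arg (nbζ v) := by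
    have hx := nb_tendsto_x_atBot.eventually_le_atBot (-1)
    filter_upwards [hx, Ioo_mem_nhdsLT_of_mem (right_mem_Ioc.2 Real.pi_pos)] with v hv1 hv2
    rw [Complex.arg_of_re_neg_of_im_nonneg]
    · rw [nbζ_re]; linarith
    · rw [nbζ_im]; exact hv2.1.le
  have := harcsin.add_const π
  rw [zero_add] at this
  exact this.congr' hev

noncomputable def nbK (n : ℕ) : ℝ := ∑ i ∈ Finset.range (n-1), |nbC n (i+1)|

lemma nbEP_abs_le (n : ℕ) (hn : 1 ≤ n) {z : ℂ} (hz : 1 ≤ ‖z‖) :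
    ‖nbEP n z‖ ≤ nbK n * Real.exp ((n:ℝ) * z.re) := by
  rw [nbEP, norm_mul]
  have h1 : ‖-(1/(n:ℂ))‖ ≤ 1 := by
    rw [norm_neg, norm_div, norm_one]
    rw [div_le_one]
    · have : (1:ℝ) ≤ (n:ℝ) := by exact_mod_cast hn
      calc (1:ℝ) ≤ (n:ℝ) := this
      _ = ‖(n:ℂ)‖ := by rw [Complex.norm_natCast]
    · have : (0:ℝ) < (n:ℝ) := by exact_mod_cast hn
      rw [Complex.norm_natCast]
      exact this
  have h2 : ‖∑ i ∈ Finset.range (n-1), nbT n (i+1) z‖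
      ≤ nbK n * Real.exp ((n:ℝ) * z.re) := by
    calc ‖∑ i ∈ Finset.range (n-1), nbT n (i+1) z‖
        ≤ ∑ i ∈ Finset.range (n-1), ‖nbT n (i+1) z‖ := by
          exact norm_sum_le _ _
    _ ≤ ∑ i ∈ Finset.range (n-1), |nbC n (i+1)| * Real.exp ((n:ℝ) * z.re) := by
        apply Finset.sum_le_sum
        intro i _
        rw [nbT, norm_mul, norm_mul]
        have he : ‖Complex.exp ((n:ℂ) * z)‖ = Real.exp ((n:ℝ) * z.re) := by
          rw [Complex.norm_exp]
          congr 1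
          simp [Complex.mul_re]
        have hC : ‖((nbC n (i+1) : ℝ) : ℂ)‖ = |nbC n (i+1)| := by rw [Complex.norm_real, Real.norm_eq_abs]
        have hzp : ‖z ^ (-((i+1 : ℕ)):ℤ)‖ ≤ 1 := by
          rw [norm_zpow, zpow_neg, zpow_natCast]
          apply inv_le_one_of_one_le₀
          exact one_le_pow₀ hz
        rw [he, hC]
        calc Real.exp ((n:ℝ) * z.re) * |nbC n (i+1)| * ‖z ^ (-((i+1:ℕ)):ℤ)‖
            ≤ Real.exp ((n:ℝ) * z.re) * |nbC n (i+1)| * 1 := by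
              apply mul_le_mul_of_nonneg_left hzp (by positivity)
        _ = |nbC n (i+1)| * Real.exp ((n:ℝ) * z.re) := by ring
    _ = nbK n * Real.exp ((n:ℝ) * z.re) := by rw [nbK, Finset.sum_mul]
  calc ‖-(1/(n:ℂ))‖ * ‖∑ i ∈ Finset.range (n-1), nbT n (i+1) z‖
      ≤ 1 * (nbK n * Real.exp ((n:ℝ) * z.re)) := by
        exact mul_le_mul h1 h2 (by positivity) zero_le_one
  _ = nbK n * Real.exp ((n:ℝ) * z.re) := one_mul _

lemma nbΦ_im (n : ℕ) (z : ℂ) :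
    (nbΦ n z).im = (nbEP n z).im + nbc n * ((nbG n z).im + Complex.arg z) := by
  simp only [nbΦ, Complex.add_im, Complex.mul_im, Complex.ofReal_re, Complex.ofReal_im,
    Complex.log_im]
  ring

lemma nbΦ_im_one (n : ℕ) (hn : 1 ≤ n) : (nbΦ n 1).im = 0 := by
  rw [nbΦ_im]
  have h1 : (nbG n 1).im = 0 := by
    have := nbG_im_real n 1
    rwa [Complex.ofReal_one] at this
  have h2 : Complex.arg 1 = 0 := Complex.arg_one
  have h3 : (nbEP n 1).im = 0 := by
    rw [nbEP]
    have hS : (∑ i ∈ Finset.range (n-1), nbT n (i+1) 1).im = 0 := by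
      rw [Complex.im_sum]
      apply Finset.sum_eq_zero
      intro i _
      rw [nbT, one_zpow, mul_one]
      have : Complex.exp ((n:ℂ) * 1) = ((Real.exp (n:ℝ) : ℝ) : ℂ) := by
        rw [mul_one, Complex.ofReal_exp, Complex.ofReal_natCast]
      rw [this, ← Complex.ofReal_mul, Complex.ofReal_im]
    rw [Complex.mul_im, hS]
    have : (-(1/(n:ℂ))).im = 0 := by simp
    rw [this]
    ring
  rw [h1, h2, h3]
  ring

lemma nb_lim0 (n : ℕ) (hn : 1 ≤ n) :
    Tendsto (fun v : ℝ => (nbΦ n (nbζ v)).im) (𝓝[>] (0:ℝ)) (𝓝 0) := by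
  have hslit : (1:ℂ) ∈ Complex.slitPlane := by
    rw [Complex.mem_slitPlane_iff]
    left
    norm_num
  have hc : ContinuousAt (nbΦ n) 1 := (nbΦ_hasDerivAt n hn hslit).continuousAt
  have h := (Complex.continuous_im.continuousAt.comp hc).tendsto.comp nb_tendsto_zeta_zero
  rw [Function.comp_def] at h
  simp only [Function.comp_apply] at h
  rwa [nbΦ_im_one n hn] at h

lemma nb_limpi (n : ℕ) (hn : 1 ≤ n) :
    Tendsto (fun v : ℝ => (nbΦ n (nbζ v)).im) (𝓝[<] π) (𝓝 (nbc n * π)) := by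
  have hxre : ∀ v, (nbζ v).re = v * Real.cos v / Real.sin v := nbζ_re
  have hatBot : Tendsto (fun v : ℝ => (nbζ v).re) (𝓝[<] π) atBot := by
    refine nb_tendsto_x_atBot.congr fun v => (hxre v).symm
  -- T1 : EP part
  have hT1 : Tendsto (fun v : ℝ => (nbEP n (nbζ v)).im) (𝓝[<] π) (𝓝 0) := by
    have hg : Tendsto (fun v : ℝ => nbK n * Real.exp ((n:ℝ) * (nbζ v).re)) (𝓝[<] π) (𝓝 0) := by
      have hh : Tendsto (fun v : ℝ => (n:ℝ) * (nbζ v).re) (𝓝[<] π) atBot :=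
        hatBot.const_mul_atBot (by exact_mod_cast hn : (0:ℝ) < (n:ℝ))
      have := (Real.tendsto_exp_atBot.comp hh).const_mul (nbK n)
      simpa using this
    have hev : ∀ᶠ v in 𝓝[<] π, |(nbEP n (nbζ v)).im| ≤ nbK n * Real.exp ((n:ℝ) * (nbζ v).re) := by
      filter_upwards [nb_tendsto_absζ_atTop.eventually_ge_atTop 1] with v hv
      calc |(nbEP n (nbζ v)).im| ≤ ‖nbEP n (nbζ v)‖ := Complex.abs_im_le_norm _
      _ ≤ nbK n * Real.exp ((n:ℝ) * (nbζ v).re) := nbEP_abs_le n hn hv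
    apply tendsto_of_tendsto_of_tendsto_of_le_of_le' (by simpa using hg.neg) hg
    · filter_upwards [hev] with v hv
      linarith [(abs_le.1 hv).1]
    · filter_upwards [hev] with v hv
      linarith [(abs_le.1 hv).2]
  -- T2 : G part
  have hT2 : Tendsto (fun v : ℝ => (nbG n (nbζ v)).im) (𝓝[<] π) (𝓝 0) := by
    have hg : Tendsto (fun v : ℝ => π / |(nbζ v).re|) (𝓝[<] π) (𝓝 0) := by
      apply Filter.Tendsto.div_atTop (tendsto_const_nhds)
      exact tendsto_abs_atBot_atTop.comp hatBot
    have hev : ∀ᶠ v in 𝓝[<] π, |(nbG n (nbζ v)).im| ≤ π / |(nbζ v).re| := by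
      filter_upwards [hatBot.eventually_le_atBot (-1),
        Ioo_mem_nhdsLT_of_mem (right_mem_Ioc.2 Real.pi_pos)] with v hv1 hv2
      apply nbG_im_bound n hn hv1
      · rw [nbζ_im]; exact hv2.1.le
      · rw [nbζ_im]; exact hv2.2.le
    apply tendsto_of_tendsto_of_tendsto_of_le_of_le' (by simpa using hg.neg) hg
    · filter_upwards [hev] with v hv
      linarith [(abs_le.1 hv).1]
    · filter_upwards [hev] with v hv
      linarith [(abs_le.1 hv).2]
  -- combine
  have hsum := hT1.add ((hT2.add nb_tendsto_arg_pi).const_mul (nbc n))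
  have : (0:ℝ) + nbc n * (0 + π) = nbc n * π := by ring
  rw [this] at hsum
  refine hsum.congr fun v => ?_
  rw [nbΦ_im]

/-- Nuttall–Bouwkamp integral: for every natural `ν ≥ 1`,
`∫_0^π ((sin v / v) e^{v cot v})^ν dv = π ν^ν / ν!`. -/
theorem nuttall_bouwkamp (ν : ℕ) (hν : 1 ≤ ν) :
    ∫ v in (0:ℝ)..π, ((Real.sin v / v) * Real.exp (v * Real.cot v)) ^ ν
      = π * (ν : ℝ) ^ ν / (Nat.factorial ν) := by
  have hderiv : ∀ v ∈ Ioo (0:ℝ) π,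
      HasDerivAt (fun v : ℝ => (nbΦ ν (nbζ v)).im)
        (((Real.sin v / v) * Real.exp (v * Real.cot v)) ^ ν) v := by
    intro v hv
    have hΦ := nbΦ_hasDerivAt ν hν (nbζ_slit hv)
    have hζ := nbζ_hasDerivAt hv
    have hcomp := hΦ.scomp v hζ
    have him := Complex.imCLM.hasFDerivAt.comp_hasDerivAt v hcomp
    have heq : Complex.imCLM (nbζd v • (Complex.exp (↑ν * nbζ v) * nbζ v ^ (-(ν:ℤ))))
        = ((Real.sin v / v) * Real.exp (v * Real.cot v)) ^ ν := by
      rw [smul_eq_mul, nbF_on_curve ν hv, Complex.imCLM_apply, Complex.mul_im,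
        Complex.ofReal_re, Complex.ofReal_im, nbζd_im]
      ring
    rw [heq] at him
    exact him
  have hmain := intervalIntegral.integral_eq_sub_of_hasDerivAt_of_tendsto Real.pi_pos
    hderiv (nbf_integrable ν) (nb_lim0 ν hν) (nb_limpi ν hν)
  rw [hmain, nbc]
  have hfac : (Nat.factorial ν : ℝ) = (ν:ℝ) * (Nat.factorial (ν-1) : ℝ) := by
    rw [← Nat.mul_factorial_pred (by omega : ν ≠ 0)]
    push_cast
    ring
  have hpow : (ν:ℝ)^ν = (ν:ℝ) * (ν:ℝ)^(ν-1) := by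
    have h : (ν:ℝ)^((ν-1)+1) = (ν:ℝ) * (ν:ℝ)^(ν-1) := by
      rw [pow_succ]; ring
    rw [← h]
    congr 1
    omega
  have hν0 : (ν:ℝ) ≠ 0 := Nat.cast_ne_zero.2 (by omega)
  have hfν : (Nat.factorial (ν-1) : ℝ) ≠ 0 := by
    exact_mod_cast (Nat.factorial_pos (ν-1)).ne'
  rw [hfac, hpow]
  field_simp
  ring
end

section
/- The function t(v) = -v * csc(v) * exp(-v * cot v) is strictly decreasing on the open interval (0, π), with t(v) → -1/e as v → 0+ and t(v) → -∞ as v → π-. -/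
open Real Filter Topology


noncomputable def gBC (v : ℝ) : ℝ := Real.log v - Real.log (Real.sin v) - v * Real.cos v / Real.sin v

lemma gBC_hasDerivAt {v : ℝ} (hv : 0 < v) (hs : 0 < Real.sin v) :
    HasDerivAt gBC (v⁻¹ - (Real.sin v)⁻¹ * Real.cos v -
      ((1 * Real.cos v + v * (-Real.sin v)) * Real.sin v - v * Real.cos v * Real.cos v)
        / (Real.sin v) ^ 2) v := by
  have h1 : HasDerivAt Real.log v⁻¹ v := Real.hasDerivAt_log hv.ne'
  have h2 : HasDerivAt (fun x => Real.log (Real.sin x)) ((Real.sin v)⁻¹ * Real.cos v) v :=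
    (Real.hasDerivAt_log hs.ne').comp v (Real.hasDerivAt_sin v)
  have h3 : HasDerivAt (fun x => x * Real.cos x / Real.sin x)
      (((1 * Real.cos v + v * (-Real.sin v)) * Real.sin v - v * Real.cos v * Real.cos v)
        / (Real.sin v) ^ 2) v :=
    ((hasDerivAt_id v).mul (Real.hasDerivAt_cos v)).div (Real.hasDerivAt_sin v) hs.ne'
  exact (h1.sub h2).sub h3

lemma gBC_deriv_pos {v : ℝ} (hv : 0 < v) (hs : 0 < Real.sin v) :
    0 < v⁻¹ - (Real.sin v)⁻¹ * Real.cos v -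
      ((1 * Real.cos v + v * (-Real.sin v)) * Real.sin v - v * Real.cos v * Real.cos v)
        / (Real.sin v) ^ 2 := by
  have hpy : Real.sin v ^ 2 + Real.cos v ^ 2 = 1 := Real.sin_sq_add_cos_sq v
  have key : v⁻¹ - (Real.sin v)⁻¹ * Real.cos v -
      ((1 * Real.cos v + v * (-Real.sin v)) * Real.sin v - v * Real.cos v * Real.cos v)
        / (Real.sin v) ^ 2
      = ((Real.sin v - v * Real.cos v) ^ 2 + (v * Real.sin v) ^ 2) / (v * Real.sin v ^ 2) := by
    field_simp
    nlinarith [hpy, sq_nonneg (Real.sin v)]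
  rw [key]
  positivity

lemma gBC_strictMono : StrictMonoOn gBC (Set.Ioo 0 π) := by
  apply strictMonoOn_of_deriv_pos (convex_Ioo 0 π)
  · intro x hx
    have hs := Real.sin_pos_of_pos_of_lt_pi hx.1 hx.2
    exact (gBC_hasDerivAt hx.1 hs).continuousAt.continuousWithinAt
  · intro x hx
    rw [interior_Ioo] at hx
    have hs := Real.sin_pos_of_pos_of_lt_pi hx.1 hx.2
    rw [(gBC_hasDerivAt hx.1 hs).deriv]
    exact gBC_deriv_pos hx.1 hs

lemma t_eq {v : ℝ} (hv : v ∈ Set.Ioo 0 π) :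
    -v * (1 / Real.sin v) * Real.exp (-v * Real.cot v) = -Real.exp (gBC v) := by
  have hs := Real.sin_pos_of_pos_of_lt_pi hv.1 hv.2
  rw [gBC, Real.cot_eq_cos_div_sin, Real.exp_sub, Real.exp_sub, Real.exp_log hv.1,
    Real.exp_log hs]
  field_simp
  ring_nf
  rw [mul_assoc, ← Real.exp_add]
  simp


lemma q_tendsto : Tendsto (fun v : ℝ => v / Real.sin v) (nhdsWithin 0 (Set.Ioi 0)) (nhds 1) := by
  have h : Tendsto (fun x : ℝ => Real.sin x / x) (nhdsWithin 0 {0}ᶜ) (nhds 1) := by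
    have h0 := (Real.hasDerivAt_sin 0)
    rw [hasDerivAt_iff_tendsto_slope] at h0
    rw [Real.cos_zero] at h0
    exact h0.congr fun x => by simp [slope_def_field]
  have h2 : Tendsto (fun x : ℝ => (Real.sin x / x)⁻¹) (nhdsWithin 0 {0}ᶜ) (nhds 1) := by
    simpa using h.inv₀ one_ne_zero
  have h3 := h2.mono_left (nhdsWithin_mono 0 (fun x hx => ne_of_gt hx : Set.Ioi (0:ℝ) ⊆ {0}ᶜ))
  simpa [inv_div] using h3

lemma limit_zero : Tendsto (fun v : ℝ => -v * (1 / Real.sin v) * Real.exp (-v * Real.cot v))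
    (nhdsWithin 0 (Set.Ioi 0)) (nhds (-1 / Real.exp 1)) := by
  have hq := q_tendsto
  have hc : Tendsto Real.cos (nhdsWithin 0 (Set.Ioi (0:ℝ))) (nhds 1) := by
    have : ContinuousWithinAt Real.cos (Set.Ioi 0) 0 := Real.continuous_cos.continuousWithinAt
    simpa [ContinuousWithinAt] using this
  have hmain : Tendsto (fun v : ℝ => -(v / Real.sin v) *
      Real.exp (-(v / Real.sin v * Real.cos v))) (nhdsWithin 0 (Set.Ioi 0))
      (nhds ((-1) * Real.exp (-(1 * 1)))) :=
    (hq.neg).mul ((Real.continuous_exp.tendsto _).comp ((hq.mul hc)).neg)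
  have hval : (-1 : ℝ) * Real.exp (-(1 * 1)) = -1 / Real.exp 1 := by
    rw [Real.exp_neg]; push_cast; ring_nf
  rw [hval] at hmain
  refine hmain.congr fun v => ?_
  rw [Real.cot_eq_cos_div_sin]
  ring


lemma limit_pi : Tendsto (fun v : ℝ => -v * (1 / Real.sin v) * Real.exp (-v * Real.cot v))
    (nhdsWithin π (Set.Iio π)) atBot := by
  have hmem : Set.Ioo 0 π ∈ nhdsWithin π (Set.Iio π) :=
    Ioo_mem_nhdsLT_of_mem ⟨Real.pi_pos, le_refl π⟩
  have hsin : Tendsto (fun v : ℝ => (Real.sin v)⁻¹) (nhdsWithin π (Set.Iio π)) atTop := by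
    apply tendsto_inv_nhdsGT_zero.comp
    rw [tendsto_nhdsWithin_iff]
    constructor
    · have : ContinuousWithinAt Real.sin (Set.Iio π) π := Real.continuous_sin.continuousWithinAt
      simpa [ContinuousWithinAt, Real.sin_pi] using this
    · filter_upwards [hmem] with v hv
      exact Real.sin_pos_of_pos_of_lt_pi hv.1 hv.2
  have hv1 : Tendsto (fun v : ℝ => v) (nhdsWithin π (Set.Iio π)) (nhds π) :=
    tendsto_id.mono_left nhdsWithin_le_nhds
  have hcos : Tendsto (fun v : ℝ => -Real.cos v) (nhdsWithin π (Set.Iio π)) (nhds 1) := by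
    have : ContinuousWithinAt (fun v => -Real.cos v) (Set.Iio π) π :=
      (Real.continuous_cos.neg).continuousWithinAt
    simpa [ContinuousWithinAt, Real.cos_pi] using this
  have hA : Tendsto (fun v : ℝ => v * (Real.sin v)⁻¹) (nhdsWithin π (Set.Iio π)) atTop :=
    Filter.Tendsto.pos_mul_atTop Real.pi_pos hv1 hsin
  have hB : Tendsto (fun v : ℝ => (v * (-Real.cos v)) * (Real.sin v)⁻¹)
      (nhdsWithin π (Set.Iio π)) atTop :=
    Filter.Tendsto.pos_mul_atTop (by simpa using Real.pi_pos) (by simpa using hv1.mul hcos) hsin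
  have hE : Tendsto (fun v : ℝ => Real.exp ((v * (-Real.cos v)) * (Real.sin v)⁻¹))
      (nhdsWithin π (Set.Iio π)) atTop := Real.tendsto_exp_atTop.comp hB
  have hprod : Tendsto (fun v : ℝ => (v * (Real.sin v)⁻¹) *
      Real.exp ((v * (-Real.cos v)) * (Real.sin v)⁻¹)) (nhdsWithin π (Set.Iio π)) atTop :=
    hA.atTop_mul_atTop₀ hE
  have hneg := tendsto_neg_atTop_atBot.comp hprod
  refine hneg.congr fun v => ?_
  show -((v * (Real.sin v)⁻¹) * Real.exp ((v * (-Real.cos v)) * (Real.sin v)⁻¹))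
      = -v * (1 / Real.sin v) * Real.exp (-v * Real.cot v)
  rw [Real.cot_eq_cos_div_sin, div_eq_mul_inv]
  ring_nf


/-- The function `t v = -v csc v e^{-v cot v}` is strictly decreasing on `(0, π)`,
tends to `-1/e` as `v → 0+` and to `-∞` as `v → π-`. -/
theorem branch_cut_param_strictAnti :
    StrictAntiOn (fun v : ℝ => -v * (1 / Real.sin v) * Real.exp (-v * Real.cot v))
        (Set.Ioo 0 π) ∧
      Tendsto (fun v : ℝ => -v * (1 / Real.sin v) * Real.exp (-v * Real.cot v))
        (nhdsWithin 0 (Set.Ioi 0)) (nhds (-1 / Real.exp 1)) ∧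
      Tendsto (fun v : ℝ => -v * (1 / Real.sin v) * Real.exp (-v * Real.cot v))
        (nhdsWithin π (Set.Iio π)) atBot := by
  refine ⟨?_, limit_zero, limit_pi⟩
  intro a ha b hb hab
  have h := gBC_strictMono ha hb hab
  simp only
  rw [t_eq ha, t_eq hb]
  exact neg_lt_neg (Real.exp_lt_exp.mpr h)
end

section
/- Let W : ℝ → ℝ satisfy W(x) * exp(W(x)) = x and W(x) > 0 for all x > 0. Then for all x > 0, 1/(1 + W(x)) = (1/π) * ∫ from 0 to π of 1 / (1 + x * exp(v*cot v) * sin(v)/v) dv. -/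
open Real Set Filter intervalIntegral
open scoped Topology

noncomputable section

namespace LambertWProof

/-- `h(z) = z + x eᶻ`. -/
def hfun (x : ℝ) : ℂ → ℂ := fun z => z + x * Complex.exp z

/-- difference quotient of `h` at `-w`. -/
def qfun (x w : ℝ) : ℂ → ℂ := dslope (hfun x) (-(w : ℂ))

def gfun (x w : ℝ) : ℂ → ℂ := fun z => z / qfun x w z

/-- regular part of `z/h(z)` at the pole `-w`. -/
def psif (x w : ℝ) : ℂ → ℂ := dslope (gfun x w) (-(w : ℂ))

def omf (x w : ℝ) : ℂ → ℂ := fun z => psif x w z - 1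

/-- the residue of `z/h(z)` at `-w`. -/
def Rw (w : ℝ) : ℝ := -w / (1 + w)

/-- primitive of `omf` on the strip, built from L-shaped paths based at `1`. -/
def Psif (x w : ℝ) : ℂ → ℂ := fun z =>
  (∫ s in (1:ℝ)..z.re, omf x w s) +
    Complex.I * ∫ y in (0:ℝ)..z.im, omf x w (z.re + y * Complex.I)

def strip : Set ℂ := {z | |z.im| < π}

/-- the contour. -/
def gam (v : ℝ) : ℂ := (v * Real.cot v : ℝ) + v * Complex.I

def gam' (v : ℝ) : ℂ := ((Real.cos v * Real.sin v - v) / (Real.sin v) ^ 2 : ℝ) + Complex.I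

def tfun (v : ℝ) : ℝ := v * Real.exp (-(v * Real.cot v)) / Real.sin v

/-- the integrand of the theorem. -/
def f (x : ℝ) (v : ℝ) : ℝ := 1 / (1 + x * Real.exp (v * Real.cot v) * Real.sin v / v)

/-- the real antiderivative along the contour. -/
def Phi (x w : ℝ) (v : ℝ) : ℝ :=
  v + ((Rw w : ℂ) * Complex.log (gam v + (w : ℂ))).im + (Psif x w (gam v)).im

section Hyp

variable {x w : ℝ}

lemma xpos (hw : 0 < w) (hx : x = w * Real.exp w) : 0 < x := by
  rw [hx]; positivity

lemma x_exp_neg_w (hx : x = w * Real.exp w) : (x : ℂ) * Complex.exp (-(w : ℂ)) = (w : ℂ) := by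
  rw [← Complex.ofReal_neg, ← Complex.ofReal_exp, ← Complex.ofReal_mul]
  norm_cast
  rw [hx, mul_assoc, ← Real.exp_add]
  simp

lemma hfun_root (hx : x = w * Real.exp w) : hfun x (-(w : ℂ)) = 0 := by
  unfold hfun
  rw [x_exp_neg_w hx]
  ring

lemma hfun_hasDerivAt (z : ℂ) : HasDerivAt (hfun x) (1 + x * Complex.exp z) z :=
  (hasDerivAt_id z).add ((Complex.hasDerivAt_exp z).const_mul (x : ℂ))

lemma hfun_diff : Differentiable ℂ (hfun x) := fun z => (hfun_hasDerivAt z).differentiableAt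

lemma strip_open : IsOpen strip :=
  isOpen_lt (continuous_abs.comp Complex.continuous_im) continuous_const

lemma neg_w_mem_strip : -(w : ℂ) ∈ strip := by
  simp [strip, Real.pi_pos]

lemma strip_mem_nhds : strip ∈ 𝓝 (-(w : ℂ)) :=
  strip_open.mem_nhds neg_w_mem_strip

/-- uniqueness of the root of `h` in the strip. -/
lemma hfun_ne_zero (hw : 0 < w) (hx : x = w * Real.exp w) {z : ℂ} (hz : z ∈ strip)
    (hzw : z ≠ -(w : ℂ)) : hfun x z ≠ 0 := by
  have hxpos : 0 < x := xpos hw hx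
  intro h0
  have him : z.im + x * (Real.exp z.re * Real.sin z.im) = 0 := by
    have := congrArg Complex.im h0
    simpa [hfun, Complex.exp_im] using this
  have hzs : |z.im| < π := hz
  rcases lt_trichotomy z.im 0 with hlt | heq | hgt
  · have hsin : Real.sin z.im < 0 := by
      apply Real.sin_neg_of_neg_of_neg_pi_lt hlt
      have := abs_lt.mp hzs
      linarith [this.1]
    have : x * (Real.exp z.re * Real.sin z.im) < 0 :=
      mul_neg_of_pos_of_neg hxpos (mul_neg_of_pos_of_neg (Real.exp_pos _) hsin)
    linarith
  · have hre : z.re + x * Real.exp z.re = 0 := by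
      have := congrArg Complex.re h0
      simpa [hfun, Complex.exp_re, heq] using this
    have hmono : StrictMono (fun s : ℝ => s + x * Real.exp s) := by
      have hsm : StrictMono (fun s : ℝ => x * Real.exp s) := fun a b hab => by
        have := Real.exp_lt_exp.mpr hab
        exact mul_lt_mul_of_pos_left this hxpos
      exact strictMono_id.add hsm
    have hval : (-w) + x * Real.exp (-w) = 0 := by
      have hxe : x * Real.exp (-w) = w := by
        rw [hx, mul_assoc, ← Real.exp_add]; simp
      linarith
    have hzre : z.re = -w := hmono.injective (by rw [hre, hval])
    apply hzw
    apply Complex.ext <;> simp [hzre, heq]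
  · have hsin : 0 < Real.sin z.im := by
      apply Real.sin_pos_of_pos_of_lt_pi hgt
      have := abs_lt.mp hzs
      linarith [this.2]
    have : 0 < x * (Real.exp z.re * Real.sin z.im) :=
      mul_pos hxpos (mul_pos (Real.exp_pos _) hsin)
    linarith

lemma qfun_diff : Differentiable ℂ (qfun x w) := by
  have := (Complex.differentiableOn_dslope (f := hfun x) (c := -(w : ℂ))
    (s := Set.univ) Filter.univ_mem).mpr (hfun_diff.differentiableOn)
  exact differentiableOn_univ.mp this

lemma qfun_apply_ne (hx : x = w * Real.exp w) {z : ℂ} (hzw : z ≠ -(w : ℂ)) :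
    qfun x w z = hfun x z / (z + w) := by
  rw [qfun, dslope_of_ne _ hzw, slope_def_field, hfun_root hx, sub_zero, sub_neg_eq_add]

lemma qfun_center (hx : x = w * Real.exp w) : qfun x w (-(w : ℂ)) = 1 + w := by
  rw [qfun, dslope_same, (hfun_hasDerivAt (-(w:ℂ))).deriv, x_exp_neg_w hx]

lemma qfun_ne_zero (hw : 0 < w) (hx : x = w * Real.exp w) {z : ℂ} (hz : z ∈ strip) :
    qfun x w z ≠ 0 := by
  rcases eq_or_ne z (-(w:ℂ)) with rfl | hzw
  · rw [qfun_center hx]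
    intro h
    have h1 : ((1 + w : ℝ) : ℂ) = 0 := by push_cast; exact h
    have h2 : (1 + w : ℝ) = 0 := by exact_mod_cast h1
    linarith
  · rw [qfun_apply_ne hx hzw]
    have h1 : hfun x z ≠ 0 := hfun_ne_zero hw hx hz hzw
    have h2 : z + w ≠ 0 := by
      intro h; apply hzw; rw [← sub_eq_zero, sub_neg_eq_add]; exact h
    exact div_ne_zero h1 h2

lemma gfun_diffOn (hw : 0 < w) (hx : x = w * Real.exp w) :
    DifferentiableOn ℂ (gfun x w) strip :=
  differentiable_id.differentiableOn.div qfun_diff.differentiableOn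
    (fun z hz => qfun_ne_zero hw hx hz)

lemma psif_diffOn (hw : 0 < w) (hx : x = w * Real.exp w) :
    DifferentiableOn ℂ (psif x w) strip :=
  (Complex.differentiableOn_dslope strip_mem_nhds).mpr (gfun_diffOn hw hx)

lemma omf_diffOn (hw : 0 < w) (hx : x = w * Real.exp w) :
    DifferentiableOn ℂ (omf x w) strip :=
  (psif_diffOn hw hx).sub (differentiableOn_const 1)

lemma omf_contOn (hw : 0 < w) (hx : x = w * Real.exp w) : ContinuousOn (omf x w) strip :=
  (omf_diffOn hw hx).continuousOn

lemma gfun_center (hw : 0 < w) (hx : x = w * Real.exp w) :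
    gfun x w (-(w : ℂ)) = (Rw w : ℂ) := by
  rw [gfun, qfun_center hx, Rw]
  push_cast
  ring

/-- partial-fraction decomposition of `z/h(z)` on the strip. -/
lemma decomp (hw : 0 < w) (hx : x = w * Real.exp w) {z : ℂ} (hz : z ∈ strip)
    (hzw : z ≠ -(w : ℂ)) :
    z / hfun x z = (Rw w : ℂ) / (z + w) + psif x w z := by
  have hq : qfun x w z ≠ 0 := qfun_ne_zero hw hx hz
  have hzw' : z + w ≠ 0 := by
    intro h; apply hzw; rw [← sub_eq_zero, sub_neg_eq_add]; exact h
  have hps : psif x w z = (z / qfun x w z - (Rw w : ℂ)) / (z + w) := by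
    rw [psif, dslope_of_ne _ hzw, slope_def_field, gfun_center hw hx, sub_neg_eq_add]
    rfl
  have hh : hfun x z = (z + w) * qfun x w z := by
    rw [qfun_apply_ne hx hzw]
    field_simp
  rw [hps, hh]
  field_simp
  ring

/-- `omf` is real on the real axis. -/
lemma ofReal_mem_strip (s : ℝ) : (s : ℂ) ∈ strip := by
  simp [strip, Real.pi_pos]

lemma hfun_ofReal (s : ℝ) : hfun x (s : ℂ) = ((s + x * Real.exp s : ℝ) : ℂ) := by
  rw [hfun, ← Complex.ofReal_exp]
  push_cast
  ring

lemma psif_real (hw : 0 < w) (hx : x = w * Real.exp w) (s : ℝ) :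
    (psif x w (s : ℂ)).im = 0 := by
  have key : ∀ s : ℝ, s ≠ -w → (psif x w (s : ℂ)).im = 0 := by
    intro s hs
    have hzw : (s : ℂ) ≠ -(w : ℂ) := by
      intro h; apply hs; exact_mod_cast h
    have hd := decomp hw hx (ofReal_mem_strip s) hzw
    have : psif x w (s : ℂ) = ((s / (s + x * Real.exp s) - Rw w / (s + w) : ℝ) : ℂ) := by
      have : psif x w (s:ℂ) = (s:ℂ) / hfun x (s:ℂ) - (Rw w : ℂ) / ((s:ℂ) + w) := by
        rw [hd]; ring
      rw [this, hfun_ofReal]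
      push_cast
      ring
    rw [this]
    exact Complex.ofReal_im _
  rcases eq_or_ne s (-w) with rfl | hs
  · have h0 : ContinuousAt (psif x w) (-(w : ℂ)) :=
      (((psif_diffOn hw hx) _ neg_w_mem_strip).differentiableAt strip_mem_nhds).continuousAt
    have hcast : ((-w : ℝ) : ℂ) = -(w : ℂ) := by push_cast; ring
    have hG : ContinuousAt (fun s : ℝ => (psif x w (s : ℂ)).im) (-w) := by
      apply Complex.continuous_im.continuousAt.comp
      apply ContinuousAt.comp
      · rw [hcast]; exact h0
      · exact Complex.continuous_ofReal.continuousAt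
    have h1 : Tendsto (fun s : ℝ => (psif x w (s : ℂ)).im) (𝓝[≠] (-w))
        (𝓝 ((psif x w ((-w : ℝ) : ℂ)).im)) :=
      (hG.tendsto).mono_left nhdsWithin_le_nhds
    have h2 : Tendsto (fun s : ℝ => (psif x w (s : ℂ)).im) (𝓝[≠] (-w)) (𝓝 0) := by
      apply Tendsto.congr' _ tendsto_const_nhds
      filter_upwards [self_mem_nhdsWithin] with s hs
      exact (key s hs).symm
    exact tendsto_nhds_unique h1 h2
  · exact key s hs

lemma omf_real (hw : 0 < w) (hx : x = w * Real.exp w) (s : ℝ) : (omf x w (s : ℂ)).im = 0 := by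
  rw [omf]
  simp [psif_real hw hx s]

lemma abs_sub_le_of_uIoc {a b s : ℝ} (hs : s ∈ Set.uIoc a b) : |s - a| ≤ |b - a| := by
  rcases Set.mem_uIoc.mp hs with ⟨h1, h2⟩ | ⟨h1, h2⟩
  · rw [abs_of_nonneg (by linarith)]
    exact le_trans (by linarith) (le_abs_self _)
  · rw [abs_of_nonpos (by linarith)]
    exact le_trans (by linarith) (neg_le_abs _)

lemma horiz_mem_strip {c : ℝ} (hc : |c| < π) (s : ℝ) : (s : ℂ) + c * Complex.I ∈ strip := by
  simpa [strip] using hc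

lemma vert_mem_strip {y : ℝ} (hy : |y| < π) (u : ℝ) : (u : ℂ) + y * Complex.I ∈ strip := by
  simpa [strip] using hy

lemma omf_horiz_intable (hw : 0 < w) (hx : x = w * Real.exp w) {a b c : ℝ} (hc : |c| < π) :
    IntervalIntegrable (fun s : ℝ => omf x w ((s : ℂ) + c * Complex.I))
      MeasureTheory.volume a b := by
  apply ContinuousOn.intervalIntegrable
  apply (omf_contOn hw hx).comp
    ((Complex.continuous_ofReal.add continuous_const).continuousOn)
  intro s _
  exact horiz_mem_strip hc s

lemma omf_real_intable (hw : 0 < w) (hx : x = w * Real.exp w) {a b : ℝ} :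
    IntervalIntegrable (fun s : ℝ => omf x w (s : ℂ)) MeasureTheory.volume a b := by
  apply ContinuousOn.intervalIntegrable
  apply (omf_contOn hw hx).comp (Complex.continuous_ofReal.continuousOn)
  intro s _
  exact ofReal_mem_strip s

lemma omf_vert_intable (hw : 0 < w) (hx : x = w * Real.exp w) {u a b : ℝ}
    (ha : |a| < π) (hb : |b| < π) :
    IntervalIntegrable (fun y : ℝ => omf x w ((u : ℂ) + y * Complex.I))
      MeasureTheory.volume a b := by
  apply ContinuousOn.intervalIntegrable
  apply (omf_contOn hw hx).comp
    ((continuous_const.add (Complex.continuous_ofReal.mul continuous_const)).continuousOn)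
  intro y hy
  have ha' := abs_lt.mp ha
  have hb' := abs_lt.mp hb
  apply vert_mem_strip
  rw [abs_lt]
  constructor
  · exact lt_of_lt_of_le (lt_min ha'.1 hb'.1) hy.1
  · exact lt_of_le_of_lt hy.2 (max_lt ha'.2 hb'.2)

lemma Psif_incr (hw : 0 < w) (hx : x = w * Real.exp w) {z z' : ℂ}
    (hz : z ∈ strip) (hz' : z' ∈ strip) :
    Psif x w z' - Psif x w z =
      (∫ s in z.re..z'.re, omf x w ((s : ℂ) + z.im * Complex.I)) +
        Complex.I * ∫ y in z.im..z'.im, omf x w ((z'.re : ℂ) + y * Complex.I) := by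
  have hzs : |z.im| < π := hz
  have hz's : |z'.im| < π := hz'
  have h0 : |(0:ℝ)| < π := by simpa using Real.pi_pos
  have hdiff : DifferentiableOn ℂ (omf x w)
      (Set.uIcc ((z.re:ℂ)).re ((z'.re:ℂ) + z.im * Complex.I).re ×ℂ
        Set.uIcc ((z.re:ℂ)).im ((z'.re:ℂ) + z.im * Complex.I).im) := by
    apply (omf_diffOn hw hx).mono
    intro ζ hζ
    rw [Complex.mem_reProdIm] at hζ
    have h2 := hζ.2
    have himz : ζ.im ∈ Set.uIcc 0 z.im := by
      convert h2 using 2 <;> simp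
    show |ζ.im| < π
    rw [abs_lt]
    have hz1 := abs_lt.mp hzs
    constructor
    · have h3 : -π < min 0 z.im := lt_min (by linarith [Real.pi_pos]) hz1.1
      have := himz.1
      simp only [Set.uIcc, Set.mem_Icc] at himz
      linarith [himz.1]
    · have h3 : max 0 z.im < π := max_lt Real.pi_pos hz1.2
      simp only [Set.uIcc, Set.mem_Icc] at himz
      linarith [himz.2]
  have hrect := Complex.integral_boundary_rect_eq_zero_of_differentiableOn (omf x w)
      ((z.re : ℂ)) ((z'.re : ℂ) + z.im * Complex.I) hdiff
  simp only [Complex.ofReal_im, Complex.ofReal_re, Complex.add_im, Complex.add_re,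
    Complex.mul_im, Complex.mul_re, Complex.I_im, Complex.I_re, Complex.ofReal_zero,
    mul_zero, mul_one, zero_mul, sub_zero, add_zero, zero_add, smul_eq_mul] at hrect
  have hB : (∫ s in (1:ℝ)..z'.re, omf x w (s:ℂ)) - ∫ s in (1:ℝ)..z.re, omf x w (s:ℂ)
      = ∫ s in z.re..z'.re, omf x w (s:ℂ) :=
    intervalIntegral.integral_interval_sub_left (omf_real_intable hw hx)
      (omf_real_intable hw hx)
  have hV : (∫ y in (0:ℝ)..z'.im, omf x w ((z'.re:ℂ) + y * Complex.I))
        - ∫ y in (0:ℝ)..z.im, omf x w ((z'.re:ℂ) + y * Complex.I)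
      = ∫ y in z.im..z'.im, omf x w ((z'.re:ℂ) + y * Complex.I) :=
    intervalIntegral.integral_interval_sub_left (omf_vert_intable hw hx h0 hz's)
      (omf_vert_intable hw hx h0 hzs)
  simp only [Psif]
  linear_combination hB + Complex.I * hV + hrect

lemma Psif_hasDerivAt (hw : 0 < w) (hx : x = w * Real.exp w) {z : ℂ} (hz : z ∈ strip) :
    HasDerivAt (Psif x w) (omf x w z) z := by
  rw [hasDerivAt_iff_isLittleO, Asymptotics.isLittleO_iff]
  intro ε hε
  have hcont : ContinuousAt (omf x w) z :=
    (((omf_diffOn hw hx) z hz).differentiableAt (strip_open.mem_nhds hz)).continuousAt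
  have hε2 : 0 < ε / 2 := by linarith
  obtain ⟨δ1, hδ1pos, hδ1⟩ := Metric.continuousAt_iff.mp hcont (ε/2) hε2
  obtain ⟨δ2, hδ2pos, hδ2⟩ := Metric.isOpen_iff.mp strip_open z hz
  have hδpos : 0 < min (δ1/2) (δ2/2) := by positivity
  filter_upwards [Metric.ball_mem_nhds z hδpos] with z' hball
  have hnorm : ‖z' - z‖ < min (δ1/2) (δ2/2) := by
    rw [← dist_eq_norm]; exact hball
  have hz'strip : z' ∈ strip :=
    hδ2 (Metric.mem_ball.mpr (lt_of_lt_of_le (Metric.mem_ball.mp hball)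
      (le_trans (min_le_right _ _) (by linarith))))
  have hd1 : |z.im| < π := hz
  have hd2 : |z'.im| < π := hz'strip
  have incr := Psif_incr hw hx hz hz'strip
  have hzz' : z' - z = ((z'.re - z.re : ℝ) : ℂ) + ((z'.im - z.im : ℝ) : ℂ) * Complex.I := by
    apply Complex.ext <;> simp
  have hre_le : |z'.re - z.re| ≤ ‖z' - z‖ := by
    have := Complex.abs_re_le_norm (z' - z)
    simpa [Complex.sub_re] using this
  have him_le : |z'.im - z.im| ≤ ‖z' - z‖ := by
    have := Complex.abs_im_le_norm (z' - z)
    simpa [Complex.sub_im] using this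
  have key : Psif x w z' - Psif x w z - (z' - z) * omf x w z =
      (∫ s in z.re..z'.re, (omf x w ((s:ℂ) + z.im * Complex.I) - omf x w z)) +
        Complex.I * ∫ y in z.im..z'.im, (omf x w ((z'.re:ℂ) + y * Complex.I) - omf x w z) := by
    rw [intervalIntegral.integral_sub (omf_horiz_intable hw hx hd1) intervalIntegrable_const,
        intervalIntegral.integral_sub (omf_vert_intable hw hx hd1 hd2) intervalIntegrable_const,
        intervalIntegral.integral_const, intervalIntegral.integral_const, incr, hzz']
    simp only [Complex.real_smul]
    push_cast
    ring
  rw [smul_eq_mul, key]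
  have hb1 : ‖∫ s in z.re..z'.re, (omf x w ((s:ℂ) + z.im * Complex.I) - omf x w z)‖
      ≤ (ε/2) * |z'.re - z.re| := by
    apply intervalIntegral.norm_integral_le_of_norm_le_const
    intro s hs
    have h1 : |s - z.re| ≤ |z'.re - z.re| := abs_sub_le_of_uIoc hs
    have h2 : ‖(s:ℂ) + z.im * Complex.I - z‖ = |s - z.re| := by
      have hpt : (s:ℂ) + z.im * Complex.I - z = ((s - z.re : ℝ) : ℂ) := by
        apply Complex.ext <;> simp
      rw [hpt, Complex.norm_real, Real.norm_eq_abs]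
    have hdist : dist ((s:ℂ) + z.im*Complex.I) z < δ1 := by
      rw [dist_eq_norm, h2]
      calc |s - z.re| ≤ ‖z' - z‖ := le_trans h1 hre_le
        _ < δ1 := lt_of_lt_of_le hnorm (le_trans (min_le_left _ _) (by linarith))
    have := hδ1 hdist
    rw [dist_eq_norm] at this
    exact le_of_lt this
  have hb2 : ‖∫ y in z.im..z'.im, (omf x w ((z'.re:ℂ) + y * Complex.I) - omf x w z)‖
      ≤ (ε/2) * |z'.im - z.im| := by
    apply intervalIntegral.norm_integral_le_of_norm_le_const
    intro y hy
    have h1 : |y - z.im| ≤ |z'.im - z.im| := abs_sub_le_of_uIoc hy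
    have h2 : ‖(z'.re:ℂ) + y * Complex.I - z‖ ≤ |z'.re - z.re| + |y - z.im| := by
      have hpt : (z'.re:ℂ) + y * Complex.I - z
          = ((z'.re - z.re : ℝ) : ℂ) + ((y - z.im : ℝ) : ℂ) * Complex.I := by
        apply Complex.ext <;> simp
      rw [hpt]
      apply le_trans (norm_add_le _ _)
      rw [norm_mul, Complex.norm_I, mul_one, Complex.norm_real, Complex.norm_real,
        Real.norm_eq_abs, Real.norm_eq_abs]
    have hdist : dist ((z'.re:ℂ) + y*Complex.I) z < δ1 := by
      rw [dist_eq_norm]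
      have : |z'.re - z.re| + |y - z.im| < δ1 := by
        have c1 : |z'.re - z.re| ≤ ‖z' - z‖ := hre_le
        have c2 : |y - z.im| ≤ ‖z' - z‖ := le_trans h1 him_le
        have : ‖z' - z‖ < δ1/2 := lt_of_lt_of_le hnorm (min_le_left _ _)
        linarith
      linarith [le_trans h2 (le_of_lt this), h2]
    have := hδ1 hdist
    rw [dist_eq_norm] at this
    exact le_of_lt this
  have htri := norm_add_le (∫ s in z.re..z'.re, (omf x w ((s:ℂ) + z.im * Complex.I) - omf x w z))
      (Complex.I * ∫ y in z.im..z'.im, (omf x w ((z'.re:ℂ) + y * Complex.I) - omf x w z))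
  rw [norm_mul, Complex.norm_I, one_mul] at htri
  have hfin : (ε/2) * |z'.re - z.re| + (ε/2) * |z'.im - z.im| ≤ ε * ‖z' - z‖ := by
    nlinarith [norm_nonneg (z' - z), abs_nonneg (z'.re - z.re), abs_nonneg (z'.im - z.im)]
  linarith [le_trans htri (add_le_add hb1 hb2)]
lemma gam_re (v : ℝ) : (gam v).re = v * Real.cot v := by
  simp only [gam, Complex.add_re, Complex.ofReal_re, Complex.mul_re, Complex.I_re,
    Complex.ofReal_im, Complex.I_im, mul_zero, zero_mul, sub_zero, add_zero, mul_one]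

lemma gam_im (v : ℝ) : (gam v).im = v := by
  simp only [gam, Complex.add_im, Complex.ofReal_im, Complex.mul_im, Complex.I_im,
    Complex.I_re, Complex.ofReal_re, mul_zero, zero_mul, mul_one, add_zero, zero_add]

lemma gam'_im (v : ℝ) : (gam' v).im = 1 := by
  simp only [gam', Complex.add_im, Complex.ofReal_im, Complex.I_im, zero_add]

lemma gam_mem_strip {v : ℝ} (hv : v ∈ Set.Ioo 0 π) : gam v ∈ strip := by
  show |(gam v).im| < π
  rw [gam_im, abs_lt]
  constructor <;> [linarith [hv.1, Real.pi_pos]; exact hv.2]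

lemma gam_ne {v : ℝ} (hv : v ∈ Set.Ioo 0 π) : gam v ≠ -(w : ℂ) := by
  intro h
  have := congrArg Complex.im h
  rw [gam_im] at this
  simp at this
  linarith [hv.1]

lemma gam_hasDerivAt {v : ℝ} (hv : Real.sin v ≠ 0) : HasDerivAt gam (gam' v) v := by
  have hre : HasDerivAt (fun v : ℝ => v * Real.cot v)
      ((Real.cos v * Real.sin v - v) / (Real.sin v) ^ 2) v := by
    have heq : (fun v : ℝ => v * Real.cot v) = fun v : ℝ => (v * Real.cos v) / Real.sin v := by
      funext u
      rw [Real.cot_eq_cos_div_sin]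
      ring
    rw [heq]
    have hnum : HasDerivAt (fun v : ℝ => v * Real.cos v)
        (1 * Real.cos v + v * -Real.sin v) v :=
      (hasDerivAt_id v).mul (Real.hasDerivAt_cos v)
    have := hnum.div (Real.hasDerivAt_sin v) hv
    refine this.congr_deriv ?_
    have hpy := Real.sin_sq_add_cos_sq v
    rw [div_left_inj' (pow_ne_zero 2 hv)]
    linear_combination (-v) * hpy
  have h1 : HasDerivAt (fun v : ℝ => ((v * Real.cot v : ℝ) : ℂ))
      (((Real.cos v * Real.sin v - v) / (Real.sin v) ^ 2 : ℝ) : ℂ) v := hre.ofReal_comp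
  have h2 : HasDerivAt (fun v : ℝ => ((v : ℝ) : ℂ) * Complex.I) Complex.I v := by
    simpa using ((hasDerivAt_id v).ofReal_comp.mul_const Complex.I)
  exact h1.add h2

lemma tfun_pos {v : ℝ} (hv : v ∈ Set.Ioo 0 π) : 0 < tfun v :=
  div_pos (mul_pos hv.1 (Real.exp_pos _)) (Real.sin_pos_of_pos_of_lt_pi hv.1 hv.2)

lemma gam_exp {v : ℝ} (hv : v ∈ Set.Ioo 0 π) :
    gam v * Complex.exp (-(gam v)) = ((tfun v : ℝ) : ℂ) := by
  have hsin : Real.sin v ≠ 0 := (Real.sin_pos_of_pos_of_lt_pi hv.1 hv.2).ne'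
  have hcot : Real.cot v * Real.sin v = Real.cos v := by
    rw [Real.cot_eq_cos_div_sin]; field_simp
  have hpy := Real.sin_sq_add_cos_sq v
  apply Complex.ext
  · simp only [Complex.mul_re, Complex.exp_re, Complex.exp_im, Complex.neg_re, Complex.neg_im,
      gam_re, gam_im, Real.cos_neg, Real.sin_neg, tfun, Complex.ofReal_re]
    rw [eq_div_iff hsin]
    set E := Real.exp (-(v * Real.cot v))
    linear_combination (v * E * Real.cos v) * hcot + (v * E) * hpy
  · simp only [Complex.mul_im, Complex.exp_re, Complex.exp_im, Complex.neg_re, Complex.neg_im,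
      gam_re, gam_im, Real.cos_neg, Real.sin_neg, tfun, Complex.ofReal_im]
    set E := Real.exp (-(v * Real.cot v))
    linear_combination (-(v * E)) * hcot

lemma hfun_gam (hw : 0 < w) (hx : x = w * Real.exp w) {v : ℝ} (hv : v ∈ Set.Ioo 0 π) :
    hfun x (gam v) = ((tfun v + x : ℝ) : ℂ) * Complex.exp (gam v) := by
  have hg : gam v = ((tfun v : ℝ) : ℂ) * Complex.exp (gam v) := by
    have := congrArg (fun z => z * Complex.exp (gam v)) (gam_exp hv)
    simpa [mul_assoc, ← Complex.exp_add] using this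
  rw [hfun]
  nth_rewrite 1 [hg]
  push_cast
  ring

lemma phi_gam (hw : 0 < w) (hx : x = w * Real.exp w) {v : ℝ} (hv : v ∈ Set.Ioo 0 π) :
    gam v / hfun x (gam v) = ((tfun v / (tfun v + x) : ℝ) : ℂ) := by
  have hg : gam v = ((tfun v : ℝ) : ℂ) * Complex.exp (gam v) := by
    have := congrArg (fun z => z * Complex.exp (gam v)) (gam_exp hv)
    simpa [mul_assoc, ← Complex.exp_add] using this
  have htx : ((tfun v + x : ℝ) : ℂ) ≠ 0 := by
    have : (0:ℝ) < tfun v + x := by linarith [tfun_pos hv, xpos hw hx]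
    exact_mod_cast this.ne'
  rw [hfun_gam hw hx hv]
  nth_rewrite 1 [hg]
  rw [mul_comm ((tfun v : ℂ)) (Complex.exp (gam v)),
    mul_comm (((tfun v + x : ℝ)) : ℂ) (Complex.exp (gam v)),
    mul_div_mul_left _ _ (Complex.exp_ne_zero _)]
  push_cast
  rfl

lemma f_eq (hw : 0 < w) (hx : x = w * Real.exp w) {v : ℝ} (hv : v ∈ Set.Ioo 0 π) :
    f x v = tfun v / (tfun v + x) := by
  have hxp := xpos hw hx
  have hsin := Real.sin_pos_of_pos_of_lt_pi hv.1 hv.2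
  have htp := tfun_pos hv
  have h2 : Real.sin v ≠ 0 := ne_of_gt hsin
  have h1 : v ≠ 0 := ne_of_gt hv.1
  have hterm : 0 < x * Real.exp (v * Real.cot v) * Real.sin v / v :=
    div_pos (mul_pos (mul_pos hxp (Real.exp_pos _)) hsin) hv.1
  have hD : 1 + x * Real.exp (v * Real.cot v) * Real.sin v / v ≠ 0 := by linarith
  have hM : tfun v + x ≠ 0 := by linarith
  rw [f, div_eq_div_iff hD hM, tfun, Real.exp_neg]
  field_simp

lemma Phi_hasDerivAt (hw : 0 < w) (hx : x = w * Real.exp w) {v : ℝ} (hv : v ∈ Set.Ioo 0 π) :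
    HasDerivAt (Phi x w) (f x v) v := by
  have hsin : Real.sin v ≠ 0 := (Real.sin_pos_of_pos_of_lt_pi hv.1 hv.2).ne'
  have hγ : HasDerivAt gam (gam' v) v := gam_hasDerivAt hsin
  have hγw : HasDerivAt (fun v => gam v + (w : ℂ)) (gam' v) v := hγ.add_const _
  -- the log part
  have hslit : gam v + (w:ℂ) ∈ Complex.slitPlane := by
    rw [Complex.mem_slitPlane_iff]
    right
    have : (gam v + (w:ℂ)).im = v := by
      rw [Complex.add_im, gam_im]; simp
    rw [this]; exact hv.1.ne'
  have hlog : HasDerivAt Complex.log (gam v + (w:ℂ))⁻¹ (gam v + (w:ℂ)) :=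
    Complex.hasDerivAt_log hslit
  have hcomp1 : HasDerivAt (fun v => Complex.log (gam v + (w:ℂ)))
      ((gam v + (w:ℂ))⁻¹ * gam' v) v := by
    have := hlog.scomp v hγw
    simpa [smul_eq_mul, mul_comm, Function.comp_def] using this
  have hcomp1' := hcomp1.const_mul ((Rw w : ℂ))
  have h2 : HasDerivAt (fun v => ((Rw w : ℂ) * Complex.log (gam v + (w:ℂ))).im)
      (((Rw w : ℂ) * ((gam v + (w:ℂ))⁻¹ * gam' v)).im) v :=
    Complex.imCLM.hasFDerivAt.comp_hasDerivAt v hcomp1'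
  -- the Psif part
  have hΨ : HasDerivAt (fun v => Psif x w (gam v)) (omf x w (gam v) * gam' v) v := by
    have := (Psif_hasDerivAt hw hx (gam_mem_strip hv)).scomp v hγ
    simpa [smul_eq_mul, mul_comm, Function.comp_def] using this
  have h3 : HasDerivAt (fun v => (Psif x w (gam v)).im) ((omf x w (gam v) * gam' v).im) v :=
    Complex.imCLM.hasFDerivAt.comp_hasDerivAt v hΨ
  have h1 : HasDerivAt (fun v : ℝ => v) 1 v := hasDerivAt_id v
  have hsum := (h1.add h2).add h3
  have hfactor : (1 : ℂ) + (Rw w : ℂ)/(gam v + (w:ℂ)) + omf x w (gam v)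
      = ((tfun v / (tfun v + x) : ℝ) : ℂ) := by
    have hdec := decomp hw hx (gam_mem_strip hv) (gam_ne hv)
    rw [← phi_gam hw hx hv, hdec, omf]
    ring
  have hval : f x v = 1 + ((Rw w : ℂ) * ((gam v + (w:ℂ))⁻¹ * gam' v)).im
      + (omf x w (gam v) * gam' v).im := by
    have e1 : (Rw w : ℂ) * ((gam v + (w:ℂ))⁻¹ * gam' v)
        = ((Rw w : ℂ)/(gam v + (w:ℂ))) * gam' v := by
      rw [div_eq_mul_inv]; ring
    have e2 : (1:ℝ) = ((1:ℂ) * gam' v).im := by rw [one_mul, gam'_im]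
    rw [e1]
    nth_rewrite 1 [e2]
    rw [← Complex.add_im, ← Complex.add_im, ← add_mul, ← add_mul, hfactor]
    rw [f_eq hw hx hv, Complex.mul_im, Complex.ofReal_re, Complex.ofReal_im, gam'_im]
    ring
  rw [hval]
  exact hsum

lemma omf_formula (hw : 0 < w) (hx : x = w * Real.exp w) {z : ℂ} (hz : z ∈ strip)
    (hzw : z ≠ -(w : ℂ)) :
    omf x w z = -((x:ℂ) * Complex.exp z) / hfun x z - (Rw w : ℂ)/(z + w) := by
  have hh : hfun x z ≠ 0 := hfun_ne_zero hw hx hz hzw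
  have hdec := decomp hw hx hz hzw
  have hps : psif x w z = z / hfun x z - (Rw w : ℂ)/(z + w) := by
    rw [hdec]; ring
  rw [omf, hps]
  have : (z : ℂ) / hfun x z - 1 = -((x:ℂ) * Complex.exp z) / hfun x z := by
    rw [div_sub_one hh, hfun]
    ring_nf
  rw [sub_right_comm, this]

lemma omf_decay (hw : 0 < w) (hx : x = w * Real.exp w) {ε : ℝ} (hε : 0 < ε) :
    ∃ u₀ : ℝ, ∀ u ≤ u₀, ∀ y : ℝ, |y| < π → ‖omf x w ((u:ℂ) + y * Complex.I)‖ ≤ ε := by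
  have hxp := xpos hw hx
  set R := Rw w with hR
  have hmin : 0 < min ε 1 / (2*x) := by positivity
  refine ⟨min (Real.log (min ε 1/(2*x))) (-(w + 2*|R|/ε + 2)), fun u hu y hy => ?_⟩
  set z : ℂ := (u:ℂ) + y * Complex.I with hzdef
  have hzre : z.re = u := by simp [hzdef]
  have hzim : z.im = y := by simp [hzdef]
  have hu1 : u ≤ Real.log (min ε 1/(2*x)) := le_trans hu (min_le_left _ _)
  have hu2 : u ≤ -(w + 2*|R|/ε + 2) := le_trans hu (min_le_right _ _)
  have hRnn : 0 ≤ |R| := abs_nonneg R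
  have hRdε : 0 ≤ 2*|R|/ε := by positivity
  have huneg : u ≤ -(w+2) := by linarith
  have hxe : x * Real.exp u ≤ min ε 1 / 2 := by
    have h1 : Real.exp u ≤ min ε 1/(2*x) := by
      calc Real.exp u ≤ Real.exp (Real.log (min ε 1/(2*x))) := Real.exp_le_exp.mpr hu1
        _ = min ε 1/(2*x) := Real.exp_log hmin
    calc x * Real.exp u ≤ x * (min ε 1/(2*x)) := by nlinarith
      _ = min ε 1/2 := by field_simp
  have hxe1 : x * Real.exp u ≤ 1/2 := le_trans hxe (by
    have : min ε 1 ≤ 1 := min_le_right _ _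
    linarith)
  have hxeε : x * Real.exp u ≤ ε/2 := le_trans hxe (by
    have : min ε 1 ≤ ε := min_le_left _ _
    linarith)
  -- strip membership etc
  have hzs : z ∈ strip := vert_mem_strip hy u
  have hzw : z ≠ -(w:ℂ) := by
    intro h
    have := congrArg Complex.re h
    rw [hzre] at this
    simp at this
    linarith
  have homf := omf_formula hw hx hzs hzw
  -- norm estimates
  have hnz : (-u : ℝ) ≤ ‖z‖ := by
    have h1 : |z.re| ≤ ‖z‖ := Complex.abs_re_le_norm z
    rw [hzre] at h1
    calc (-u : ℝ) ≤ |u| := neg_le_abs u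
      _ ≤ ‖z‖ := h1
  have hexpnorm : ‖(x:ℂ) * Complex.exp z‖ = x * Real.exp u := by
    rw [norm_mul, Complex.norm_exp, hzre,
      Complex.norm_real, Real.norm_eq_abs, abs_of_pos hxp]
  have hhnorm : (-u : ℝ) - 1/2 ≤ ‖hfun x z‖ := by
    have h1 : ‖z‖ ≤ ‖hfun x z‖ + ‖(x:ℂ) * Complex.exp z‖ := by
      have : z = hfun x z - (x:ℂ) * Complex.exp z := by rw [hfun]; ring
      calc ‖z‖ = ‖hfun x z - (x:ℂ) * Complex.exp z‖ := by rw [← this]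
        _ ≤ ‖hfun x z‖ + ‖(x:ℂ) * Complex.exp z‖ := norm_sub_le _ _
    rw [hexpnorm] at h1
    linarith
  have hzwnorm : (2*|R|/ε + 2 : ℝ) ≤ ‖z + w‖ := by
    have h1 : |(z + (w:ℂ)).re| ≤ ‖z + w‖ := Complex.abs_re_le_norm _
    have h2 : (z + (w:ℂ)).re = u + w := by rw [Complex.add_re, hzre]; simp
    rw [h2] at h1
    calc (2*|R|/ε + 2 : ℝ) ≤ -(u + w) := by linarith
      _ ≤ |u + w| := neg_le_abs _
      _ ≤ ‖z + w‖ := h1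
  have hhpos : (0:ℝ) < -u - 1/2 := by linarith
  have ht1 : ‖-((x:ℂ) * Complex.exp z) / hfun x z‖ ≤ ε/2 := by
    rw [norm_div, norm_neg, hexpnorm]
    have hden : (0:ℝ) < ‖hfun x z‖ := lt_of_lt_of_le hhpos hhnorm
    have hge1 : (1:ℝ) ≤ ‖hfun x z‖ := by linarith
    calc x * Real.exp u / ‖hfun x z‖ ≤ x * Real.exp u / 1 := by
          apply div_le_div_of_nonneg_left ?_ ?_ hge1
          · positivity
          · norm_num
      _ ≤ ε/2 := by rw [div_one]; exact hxeε
  have ht2 : ‖(R:ℂ)/(z + w)‖ ≤ ε/2 := by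
    rw [norm_div, Complex.norm_real, Real.norm_eq_abs]
    have hden : (0:ℝ) < ‖z + (w:ℂ)‖ := lt_of_lt_of_le (by positivity) hzwnorm
    rw [div_le_iff₀ hden]
    calc |R| ≤ (ε/2) * (2*|R|/ε + 2) := by
          have h5 : (ε/2) * (2*|R|/ε + 2) = |R| + ε := by field_simp
          linarith
      _ ≤ (ε/2) * ‖z + (w:ℂ)‖ := mul_le_mul_of_nonneg_left hzwnorm (by positivity)
  calc ‖omf x w z‖ = ‖-((x:ℂ) * Complex.exp z) / hfun x z - (R:ℂ)/(z + w)‖ := by rw [homf]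
    _ ≤ ‖-((x:ℂ) * Complex.exp z) / hfun x z‖ + ‖(R:ℂ)/(z + w)‖ := norm_sub_le _ _
    _ ≤ ε/2 + ε/2 := add_le_add ht1 ht2
    _ = ε := by ring

lemma vcot_tendsto_one : Tendsto (fun v : ℝ => v * Real.cot v) (𝓝[>] (0:ℝ)) (𝓝 1) := by
  have hslope : Tendsto (fun v : ℝ => Real.sin v / v) (𝓝[≠] (0:ℝ)) (𝓝 1) := by
    have h := Real.hasDerivAt_sin 0
    rw [hasDerivAt_iff_tendsto_slope] at h
    simp only [Real.cos_zero] at h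
    have heq : (fun v : ℝ => Real.sin v / v) = slope Real.sin 0 := by
      funext v; rw [slope_def_field]; simp
    rw [heq]; exact h
  have hvsin : Tendsto (fun v : ℝ => v / Real.sin v) (𝓝[≠] (0:ℝ)) (𝓝 1) := by
    have h := hslope.inv₀ one_ne_zero
    have heq : (fun v : ℝ => v / Real.sin v) = fun v => (Real.sin v / v)⁻¹ := by
      funext v; rw [inv_div]
    rw [heq]
    simpa using h
  have hcos : Tendsto (fun v : ℝ => Real.cos v) (𝓝[≠] (0:ℝ)) (𝓝 1) := by
    have h := Real.continuous_cos.tendsto 0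
    rw [Real.cos_zero] at h
    exact h.mono_left nhdsWithin_le_nhds
  have hmul := hvsin.mul hcos
  rw [mul_one] at hmul
  have heq : (fun v : ℝ => v * Real.cot v) = fun v => (v / Real.sin v) * Real.cos v := by
    funext v; rw [Real.cot_eq_cos_div_sin]; ring
  rw [heq]
  exact hmul.mono_left (nhdsWithin_mono _ (fun v hv => ne_of_gt hv))

lemma gam_tendsto_one : Tendsto gam (𝓝[>] (0:ℝ)) (𝓝 1) := by
  have h1 : Tendsto (fun v : ℝ => ((v * Real.cot v : ℝ) : ℂ)) (𝓝[>] (0:ℝ)) (𝓝 1) := by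
    have := (Complex.continuous_ofReal.tendsto 1).comp vcot_tendsto_one
    simpa only [Function.comp_def, Complex.ofReal_one] using this
  have h2 : Tendsto (fun v : ℝ => ((v:ℝ) : ℂ) * Complex.I) (𝓝[>] (0:ℝ)) (𝓝 0) := by
    have h0 : Tendsto (fun v : ℝ => (v : ℂ)) (𝓝[>] (0:ℝ)) (𝓝 0) := by
      have := (Complex.continuous_ofReal.tendsto 0).comp
        (tendsto_id.mono_left (nhdsWithin_le_nhds : 𝓝[>] (0:ℝ)  ≤ 𝓝 0))
      simpa using this
    simpa using h0.mul_const Complex.I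
  have h3 := h1.add h2
  rw [add_zero] at h3
  exact h3

lemma Psif_one : Psif x w 1 = 0 := by
  simp [Psif, Complex.one_re, Complex.one_im, intervalIntegral.integral_same]

lemma Phi_tendsto_zero (hw : 0 < w) (hx : x = w * Real.exp w) :
    Tendsto (Phi x w) (𝓝[>] (0:ℝ)) (𝓝 0) := by
  have hid : Tendsto (fun v : ℝ => v) (𝓝[>] (0:ℝ)) (𝓝 0) :=
    tendsto_id.mono_left nhdsWithin_le_nhds
  have hgam := gam_tendsto_one
  have hgw : Tendsto (fun v => gam v + (w:ℂ)) (𝓝[>] (0:ℝ)) (𝓝 (1 + w)) := hgam.add_const _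
  have hslit : ((1:ℂ) + (w:ℂ)) ∈ Complex.slitPlane := by
    rw [Complex.mem_slitPlane_iff]
    left
    simp only [Complex.add_re, Complex.one_re, Complex.ofReal_re]
    linarith
  have hlog : Tendsto (fun v => Complex.log (gam v + (w:ℂ))) (𝓝[>] (0:ℝ))
      (𝓝 (Complex.log (1 + (w:ℂ)))) :=
    (continuousAt_clog hslit).tendsto.comp hgw
  have hmid : Tendsto (fun v => ((Rw w : ℂ) * Complex.log (gam v + (w:ℂ))).im) (𝓝[>] (0:ℝ))
      (𝓝 (((Rw w : ℂ) * Complex.log (1 + (w:ℂ))).im)) :=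
    (Complex.continuous_im.tendsto _).comp (tendsto_const_nhds.mul hlog)
  have hmidval : ((Rw w : ℂ) * Complex.log (1 + (w:ℂ))).im = 0 := by
    have h1 : (1 + (w:ℂ)) = ((1 + w : ℝ) : ℂ) := by push_cast; ring
    rw [h1, Complex.mul_im, Complex.ofReal_im, Complex.ofReal_re, Complex.log_im,
      Complex.arg_ofReal_of_nonneg (by linarith)]
    simp
  have hPc : ContinuousAt (Psif x w) 1 := by
    have h1 : (1:ℂ) ∈ strip := by simpa using ofReal_mem_strip 1
    exact (Psif_hasDerivAt hw hx h1).differentiableAt.continuousAt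
  have hΨc : Tendsto (fun v => (Psif x w (gam v)).im) (𝓝[>] (0:ℝ)) (𝓝 ((Psif x w 1).im)) :=
    (Complex.continuous_im.tendsto _).comp (hPc.tendsto.comp hgam)
  have hlim := (hid.add hmid).add hΨc
  rw [hmidval, Psif_one] at hlim
  have h00 : ((0:ℝ) + 0) + (0:ℂ).im = 0 := by simp
  rw [h00] at hlim
  exact hlim

lemma vcot_tendsto_atBot : Tendsto (fun v : ℝ => v * Real.cot v) (𝓝[<] π) atBot := by
  have hsin : Tendsto Real.sin (𝓝[<] π) (𝓝[>] 0) := by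
    apply tendsto_nhdsWithin_of_tendsto_nhds_of_eventually_within
    · have := Real.continuous_sin.tendsto π
      rw [Real.sin_pi] at this
      exact this.mono_left nhdsWithin_le_nhds
    · filter_upwards [Ioo_mem_nhdsLT_of_mem (right_mem_Ioc.mpr Real.pi_pos)] with v hv
      exact Real.sin_pos_of_pos_of_lt_pi hv.1 hv.2
  have hinv : Tendsto (fun v => (Real.sin v)⁻¹) (𝓝[<] π) atTop := hsin.inv_tendsto_nhdsGT_zero
  have hnum : Tendsto (fun v : ℝ => v * Real.cos v) (𝓝[<] π) (𝓝 (-π)) := by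
    have h := (continuous_id.mul Real.continuous_cos).tendsto π
    simp only [Pi.mul_apply, id_eq, Real.cos_pi, mul_neg_one] at h
    exact h.mono_left nhdsWithin_le_nhds
  have hprod := hinv.atTop_mul_neg (by linarith [Real.pi_pos] : -π < 0) hnum
  have heq : (fun v : ℝ => v * Real.cot v) = fun v => (Real.sin v)⁻¹ * (v * Real.cos v) := by
    funext v
    rw [Real.cot_eq_cos_div_sin, div_eq_mul_inv]
    ring
  rw [heq]
  exact hprod

lemma arg_tendsto_pi (hw : 0 < w) :
    Tendsto (fun v => (gam v + (w:ℂ)).arg) (𝓝[<] π) (𝓝 π) := by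
  have hre : ∀ v : ℝ, (gam v + (w:ℂ)).re = v * Real.cot v + w := by
    intro v; rw [Complex.add_re, gam_re, Complex.ofReal_re]
  have him : ∀ v : ℝ, (gam v + (w:ℂ)).im = v := by
    intro v; rw [Complex.add_im, gam_im, Complex.ofReal_im, add_zero]
  have hreBot : Tendsto (fun v => (gam v + (w:ℂ)).re) (𝓝[<] π) atBot := by
    simp only [hre]
    exact tendsto_atBot_add_const_right _ w vcot_tendsto_atBot
  have habs : Tendsto (fun v => ‖gam v + (w:ℂ)‖) (𝓝[<] π) atTop := by
    apply tendsto_atTop_mono (fun v => ?_) (tendsto_neg_atBot_atTop.comp hreBot)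
    calc -(gam v + (w:ℂ)).re ≤ |(gam v + (w:ℂ)).re| := neg_le_abs _
      _ ≤ ‖gam v + (w:ℂ)‖ := Complex.abs_re_le_norm _
  have hratio : Tendsto (fun v => (-(gam v + (w:ℂ))).im / ‖gam v + (w:ℂ)‖)
      (𝓝[<] π) (𝓝 0) := by
    have hnum : Tendsto (fun v => (-(gam v + (w:ℂ))).im) (𝓝[<] π) (𝓝 (-π)) := by
      simp only [Complex.neg_im, him]
      exact (tendsto_id.mono_left nhdsWithin_le_nhds).neg
    exact hnum.div_atTop habs
  have harcsin : Tendsto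
      (fun v => Real.arcsin ((-(gam v + (w:ℂ))).im / ‖gam v + (w:ℂ)‖) + π)
      (𝓝[<] π) (𝓝 π) := by
    have h0 := (Real.continuous_arcsin.tendsto 0).comp hratio
    rw [Real.arcsin_zero] at h0
    have := h0.add_const π
    simpa using this
  apply Tendsto.congr' _ harcsin
  have hev1 : ∀ᶠ v in 𝓝[<] π, (gam v + (w:ℂ)).re < 0 :=
    hreBot.eventually (eventually_lt_atBot 0)
  have hev2 : ∀ᶠ v in 𝓝[<] π, (0:ℝ) ≤ (gam v + (w:ℂ)).im := by
    filter_upwards [Ioo_mem_nhdsLT_of_mem (right_mem_Ioc.mpr Real.pi_pos)] with v hv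
    rw [him]
    exact hv.1.le
  filter_upwards [hev1, hev2] with v h1 h2
  exact (Complex.arg_of_re_neg_of_im_nonneg h1 h2).symm

lemma PsifIm_gam_tendsto (hw : 0 < w) (hx : x = w * Real.exp w) :
    Tendsto (fun v => (Psif x w (gam v)).im) (𝓝[<] π) (𝓝 0) := by
  have hIm : ∀ z : ℂ, (Psif x w z).im
      = (∫ y in (0:ℝ)..z.im, omf x w ((z.re:ℂ) + y * Complex.I)).re := by
    intro z
    rw [Psif, Complex.add_im]
    have h1 : (∫ s in (1:ℝ)..z.re, omf x w (s:ℂ)).im = 0 := by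
      have heq : (fun s : ℝ => omf x w (s:ℂ)) = fun s : ℝ => (((omf x w (s:ℂ)).re : ℝ) : ℂ) := by
        funext s
        apply Complex.ext
        · simp
        · simp [omf_real hw hx s]
      rw [heq, intervalIntegral.integral_ofReal]
      simp
    rw [h1, Complex.mul_im, Complex.I_re, Complex.I_im]
    ring
  apply Metric.tendsto_nhds.mpr
  intro ε hε
  have hεd : 0 < ε/(2*π+1) := by positivity
  obtain ⟨u₀, hu₀⟩ := omf_decay hw hx hεd
  have hev1 := vcot_tendsto_atBot.eventually (eventually_le_atBot u₀)
  filter_upwards [hev1, Ioo_mem_nhdsLT_of_mem (right_mem_Ioc.mpr Real.pi_pos)] with v hv1 hv2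
  rw [dist_zero_right, Real.norm_eq_abs, hIm (gam v), gam_re, gam_im]
  have hbound : ‖∫ y in (0:ℝ)..v, omf x w (((v * Real.cot v : ℝ):ℂ) + y * Complex.I)‖
      ≤ (ε/(2*π+1)) * |v - 0| := by
    apply intervalIntegral.norm_integral_le_of_norm_le_const
    intro y hy
    apply hu₀ _ hv1
    rcases Set.mem_uIoc.mp hy with ⟨h1, h2⟩ | ⟨h1, h2⟩
    · rw [abs_lt]
      constructor
      · linarith [Real.pi_pos]
      · linarith [hv2.2]
    · exfalso
      linarith [hv2.1]
  have habs : |(∫ y in (0:ℝ)..v, omf x w (((v * Real.cot v : ℝ):ℂ) + y * Complex.I)).re|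
      ≤ ‖∫ y in (0:ℝ)..v, omf x w (((v * Real.cot v : ℝ):ℂ) + y * Complex.I)‖ := by
    exact Complex.abs_re_le_norm _
  have hvpi : |v - 0| ≤ π := by
    rw [sub_zero, abs_of_pos hv2.1]
    exact hv2.2.le
  have hfin : (ε/(2*π+1)) * |v - 0| < ε := by
    have h2 : (ε/(2*π+1)) * |v - 0| ≤ (ε/(2*π+1)) * π :=
      mul_le_mul_of_nonneg_left hvpi hεd.le
    have h3 : (ε/(2*π+1)) * π < ε := by
      rw [div_mul_eq_mul_div, div_lt_iff₀ (by positivity)]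
      nlinarith [Real.pi_pos]
    linarith
  calc |(∫ y in (0:ℝ)..v, omf x w (((v * Real.cot v : ℝ):ℂ) + y * Complex.I)).re|
      ≤ ‖∫ y in (0:ℝ)..v, omf x w (((v * Real.cot v : ℝ):ℂ) + y * Complex.I)‖ := habs
    _ ≤ (ε/(2*π+1)) * |v - 0| := hbound
    _ < ε := hfin

lemma Phi_tendsto_pi (hw : 0 < w) (hx : x = w * Real.exp w) :
    Tendsto (Phi x w) (𝓝[<] π) (𝓝 (π + Rw w * π)) := by
  have hid : Tendsto (fun v : ℝ => v) (𝓝[<] π) (𝓝 π) :=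
    tendsto_id.mono_left nhdsWithin_le_nhds
  have hmid : Tendsto (fun v => ((Rw w : ℂ) * Complex.log (gam v + (w:ℂ))).im) (𝓝[<] π)
      (𝓝 (Rw w * π)) := by
    have hform : ∀ v : ℝ, ((Rw w : ℂ) * Complex.log (gam v + (w:ℂ))).im
        = Rw w * (gam v + (w:ℂ)).arg := by
      intro v
      rw [Complex.mul_im, Complex.ofReal_im, Complex.ofReal_re, Complex.log_im]
      ring
    simp only [hform]
    exact (arg_tendsto_pi hw).const_mul (Rw w)
  have hpsi := PsifIm_gam_tendsto hw hx
  have hlim := (hid.add hmid).add hpsi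
  rw [show ((π + Rw w * π) + 0 : ℝ) = π + Rw w * π by ring] at hlim
  exact hlim

lemma f_intable (hw : 0 < w) (hx : x = w * Real.exp w) :
    IntervalIntegrable (f x) MeasureTheory.volume 0 π := by
  have hxp := xpos hw hx
  rw [intervalIntegrable_iff, Set.uIoc_of_le Real.pi_pos.le]
  have hcot : Measurable Real.cot := by
    have h : Real.cot = fun v => Real.cos v / Real.sin v :=
      funext fun v => Real.cot_eq_cos_div_sin v
    rw [h]
    exact Real.measurable_cos.div Real.measurable_sin
  have hmeas : Measurable (f x) := by
    unfold f
    apply Measurable.div measurable_const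
    apply Measurable.add measurable_const
    apply Measurable.div _ measurable_id
    apply Measurable.mul _ Real.measurable_sin
    exact measurable_const.mul (Real.measurable_exp.comp (measurable_id.mul hcot))
  apply MeasureTheory.Integrable.mono'
    (MeasureTheory.integrableOn_const measure_Ioc_lt_top.ne :
      MeasureTheory.IntegrableOn (fun _ => (1:ℝ)) (Set.Ioc 0 π) MeasureTheory.volume)
  · exact hmeas.aestronglyMeasurable.restrict
  · apply (MeasureTheory.ae_restrict_iff' measurableSet_Ioc).mpr
    apply Filter.Eventually.of_forall
    intro v hv
    have hterm : 0 ≤ x * Real.exp (v * Real.cot v) * Real.sin v / v := by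
      apply div_nonneg _ hv.1.le
      apply mul_nonneg (by positivity) (Real.sin_nonneg_of_nonneg_of_le_pi hv.1.le hv.2)
    have hD : (0:ℝ) < 1 + x * Real.exp (v * Real.cot v) * Real.sin v / v := by linarith
    rw [Real.norm_eq_abs, f, abs_of_nonneg (le_of_lt (by positivity))]
    rw [div_le_one hD]
    linarith

lemma ftc (hw : 0 < w) (hx : x = w * Real.exp w) {a b : ℝ} (ha : 0 < a) (hab : a ≤ b)
    (hb : b < π) :
    ∫ v in a..b, f x v = Phi x w b - Phi x w a := by
  apply intervalIntegral.integral_eq_sub_of_hasDerivAt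
  · intro v hv
    rw [Set.uIcc_of_le hab] at hv
    exact Phi_hasDerivAt hw hx ⟨lt_of_lt_of_le ha hv.1, lt_of_le_of_lt hv.2 hb⟩
  · apply (f_intable hw hx).mono_set
    rw [Set.uIcc_of_le hab, Set.uIcc_of_le Real.pi_pos.le]
    exact Set.Icc_subset_Icc ha.le hb.le

lemma integral_value (hw : 0 < w) (hx : x = w * Real.exp w) :
    ∫ v in (0:ℝ)..π, f x v = π + Rw w * π := by
  have hπ := Real.pi_pos
  set c := π/2 with hc
  have hc0 : 0 < c := by rw [hc]; linarith
  have hcπ : c < π := by rw [hc]; linarith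
  have hint := f_intable hw hx
  have hi1 : IntervalIntegrable (f x) MeasureTheory.volume 0 c := by
    apply hint.mono_set
    rw [Set.uIcc_of_le hc0.le, Set.uIcc_of_le hπ.le]
    exact Set.Icc_subset_Icc le_rfl hcπ.le
  have hi2 : IntervalIntegrable (f x) MeasureTheory.volume c π := by
    apply hint.mono_set
    rw [Set.uIcc_of_le hcπ.le, Set.uIcc_of_le hπ.le]
    exact Set.Icc_subset_Icc hc0.le le_rfl
  have hsplit := intervalIntegral.integral_add_adjacent_intervals hi1 hi2
  -- left piece : ∫ 0..c = Phi c
  have hleft : ∫ v in (0:ℝ)..c, f x v = Phi x w c := by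
    have hio : MeasureTheory.IntegrableOn (f x) (Set.uIcc 0 c) MeasureTheory.volume := by
      rw [Set.uIcc_of_le hc0.le, integrableOn_Icc_iff_integrableOn_Ioc]
      rw [intervalIntegrable_iff, Set.uIoc_of_le hc0.le] at hi1
      exact hi1
    have hpr := intervalIntegral.continuousOn_primitive_interval hio
    have h00 : Tendsto (fun a => ∫ v in (0:ℝ)..a, f x v) (𝓝[>] (0:ℝ)) (𝓝 0) := by
      have h0 := (hpr 0 (Set.left_mem_uIcc)).tendsto
      rw [intervalIntegral.integral_same] at h0
      have heq : 𝓝[>] (0:ℝ) = 𝓝[Set.Ioo 0 c] (0:ℝ) :=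
        (nhdsWithin_Ioo_eq_nhdsGT hc0).symm
      rw [heq]
      exact h0.mono_left (nhdsWithin_mono _ (Set.Ioo_subset_Icc_self.trans
        (by rw [Set.uIcc_of_le hc0.le])))
    have hev : ∀ᶠ a in 𝓝[>] (0:ℝ), Phi x w c - Phi x w a
        = (∫ v in (0:ℝ)..c, f x v) - ∫ v in (0:ℝ)..a, f x v := by
      have hmem : Set.Ioo (0:ℝ) c ∈ 𝓝[>] (0:ℝ) := Ioo_mem_nhdsGT_of_mem
        (Set.left_mem_Ico.mpr hc0)
      filter_upwards [hmem] with a ha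
      have h1 : ∫ v in a..c, f x v = Phi x w c - Phi x w a := ftc hw hx ha.1 ha.2.le hcπ
      have h2 : (∫ v in (0:ℝ)..c, f x v) - ∫ v in (0:ℝ)..a, f x v = ∫ v in a..c, f x v := by
        apply intervalIntegral.integral_interval_sub_left hi1
        apply hint.mono_set
        rw [Set.uIcc_of_le ha.1.le, Set.uIcc_of_le hπ.le]
        exact Set.Icc_subset_Icc le_rfl (by linarith [ha.2])
      rw [h2, h1]
    have t1 : Tendsto (fun a => Phi x w c - Phi x w a) (𝓝[>] (0:ℝ))
        (𝓝 (Phi x w c - 0)) := tendsto_const_nhds.sub (Phi_tendsto_zero hw hx)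
    have t2 : Tendsto (fun a => Phi x w c - Phi x w a) (𝓝[>] (0:ℝ))
        (𝓝 ((∫ v in (0:ℝ)..c, f x v) - 0)) := by
      apply Tendsto.congr' _ (tendsto_const_nhds.sub h00)
      filter_upwards [hev] with a ha
      exact ha.symm
    have := tendsto_nhds_unique t1 t2
    rw [sub_zero, sub_zero] at this
    exact this.symm
  -- right piece : ∫ c..π = π + Rw w * π - Phi c
  have hright : ∫ v in c..π, f x v = π + Rw w * π - Phi x w c := by
    have hio : MeasureTheory.IntegrableOn (f x) (Set.uIcc c π) MeasureTheory.volume := by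
      rw [Set.uIcc_of_le hcπ.le, integrableOn_Icc_iff_integrableOn_Ioc]
      rw [intervalIntegrable_iff, Set.uIoc_of_le hcπ.le] at hi2
      exact hi2
    have hpr := intervalIntegral.continuousOn_primitive_interval hio
    have hππ : Tendsto (fun b => ∫ v in c..b, f x v) (𝓝[<] π) (𝓝 (∫ v in c..π, f x v)) := by
      have h0 := (hpr π (Set.right_mem_uIcc)).tendsto
      have heq : 𝓝[<] π = 𝓝[Set.Ioo c π] π :=
        (nhdsWithin_Ioo_eq_nhdsLT hcπ).symm
      rw [heq]
      exact h0.mono_left (nhdsWithin_mono _ (Set.Ioo_subset_Icc_self.trans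
        (by rw [Set.uIcc_of_le hcπ.le])))
    have hev : ∀ᶠ b in 𝓝[<] π, Phi x w b - Phi x w c = ∫ v in c..b, f x v := by
      have hmem : Set.Ioo c π ∈ 𝓝[<] π := Ioo_mem_nhdsLT_of_mem
        (Set.right_mem_Ioc.mpr hcπ)
      filter_upwards [hmem] with b hb
      exact (ftc hw hx hc0 hb.1.le hb.2).symm
    have t1 : Tendsto (fun b => Phi x w b - Phi x w c) (𝓝[<] π)
        (𝓝 ((π + Rw w * π) - Phi x w c)) := (Phi_tendsto_pi hw hx).sub_const _
    have t2 : Tendsto (fun b => Phi x w b - Phi x w c) (𝓝[<] π)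
        (𝓝 (∫ v in c..π, f x v)) := by
      apply Tendsto.congr' _ hππ
      filter_upwards [hev] with b hb
      exact hb.symm
    exact (tendsto_nhds_unique t1 t2).symm
  rw [← hsplit, hleft, hright]
  ring

end Hyp

end LambertWProof

open LambertWProof in
/-- Stieltjes integral representation of `1/(1 + W(x))` for the principal real branch
of Lambert W on `(0, ∞)`. -/
theorem one_div_one_add_lambertW (W : ℝ → ℝ)
    (hW : ∀ x > 0, W x * Real.exp (W x) = x) (hWpos : ∀ x > 0, W x > 0) :
    ∀ x > (0:ℝ),
      1 / (1 + W x) = (1 / π) * ∫ v in (0:ℝ)..π,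
        1 / (1 + x * Real.exp (v * Real.cot v) * Real.sin v / v) := by
  intro x hx0
  have hw : 0 < W x := hWpos x hx0
  have hxw : x = W x * Real.exp (W x) := (hW x hx0).symm
  have hval := LambertWProof.integral_value hw hxw
  have hfeq : (∫ v in (0:ℝ)..π, 1 / (1 + x * Real.exp (v * Real.cot v) * Real.sin v / v))
      = ∫ v in (0:ℝ)..π, LambertWProof.f x v := rfl
  rw [hfeq, hval, LambertWProof.Rw]
  have h1w : (1 + W x) ≠ 0 := by linarith
  have hπ : (π : ℝ) ≠ 0 := Real.pi_ne_zero
  field_simp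
  ring
end
end

section
/- Let W : ℝ → ℝ satisfy W(x) * exp(W(x)) = x for all x ∈ (-1/e, e), with W real-valued there and W(x) > -1. Then for all x ∈ (-1/e, e), W(x) = (2/π) * ∫ from 0 to π of (cos(3θ/2) - x*exp(-cos θ)*cos(5θ/2 + sin θ)) / (1 - 2x*exp(-cos θ)*cos(θ + sin θ) + x^2*exp(-2cos θ)) * cos(θ/2) dθ. -/
open Real

lemma LWaux_strictMono : StrictMonoOn (fun t : ℝ => t * Real.exp t) (Set.Ici (-1)) := by
  have hd : ∀ t : ℝ, HasDerivAt (fun t : ℝ => t * Real.exp t) ((1 + t) * Real.exp t) t := by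
    intro t
    have := (hasDerivAt_id' t).mul (Real.hasDerivAt_exp t)
    exact this.congr_deriv (by ring)
  apply strictMonoOn_of_deriv_pos (convex_Ici _)
  · exact (continuous_id.mul Real.continuous_exp).continuousOn
  · intro t ht
    rw [interior_Ici] at ht
    rw [(hd t).deriv]
    have : 0 < 1 + t := by linarith [ht.out]
    positivity

lemma LWaux_root_unique {x r : ℝ} (hr1 : -1 < r) (hr2 : r ≤ 1) (hre : r * Real.exp r = x)
    (w : ℂ) (hw : ‖w‖ ≤ 1) (hwe : w * Complex.exp w = (x : ℂ)) : w = (r : ℂ) := by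
  have him : w.im = 0 := by
    by_contra hv
    have habs2 : w.re ^ 2 + w.im ^ 2 ≤ 1 := by
      have h := Complex.sq_norm w
      rw [Complex.normSq_apply] at h
      nlinarith [hw, norm_nonneg w]
    have h1 : w.re * Real.sin w.im + w.im * Real.cos w.im = 0 := by
      have h : (w * Complex.exp w).im = 0 := by rw [hwe]; simp
      rw [Complex.mul_im, Complex.exp_re, Complex.exp_im] at h
      have hexp : Real.exp w.re > 0 := Real.exp_pos _
      nlinarith [h]
    have hsin : Real.sin w.im ^ 2 < w.im ^ 2 := by
      have hvle : |w.im| ≤ 1 := le_trans (Complex.abs_im_le_norm w) hw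
      rw [abs_le] at hvle
      rcases lt_or_gt_of_ne hv with h | h
      · have h2 : 0 < -w.im := by linarith
        have h3 := Real.sin_lt h2
        have hpos : 0 < Real.sin (-w.im) :=
          Real.sin_pos_of_pos_of_lt_pi h2 (by linarith [Real.pi_gt_three, hvle.1])
        rw [Real.sin_neg] at h3 hpos
        nlinarith
      · have h3 := Real.sin_lt h
        have hpos : 0 < Real.sin w.im :=
          Real.sin_pos_of_pos_of_lt_pi h (by linarith [Real.pi_gt_three, hvle.2])
        nlinarith
    have hsq : (w.re ^ 2 + w.im ^ 2) * Real.sin w.im ^ 2 = w.im ^ 2 := by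
      have h1' : (w.re * Real.sin w.im) ^ 2 = (w.im * Real.cos w.im) ^ 2 := by
        have : w.re * Real.sin w.im = -(w.im * Real.cos w.im) := by linarith
        rw [this]; ring
      linear_combination h1' + w.im ^ 2 * (Real.sin_sq_add_cos_sq w.im)
    nlinarith [sq_nonneg (Real.sin w.im), sq_nonneg w.im]
  set u := w.re with hu
  have hwu : w = (u : ℂ) := Complex.ext rfl (by simp [him])
  rw [hwu] at hwe
  have hue : u * Real.exp u = x := by
    rw [← Complex.ofReal_exp, ← Complex.ofReal_mul] at hwe
    exact_mod_cast hwe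
  have huabs : |u| ≤ 1 := by
    rw [hwu] at hw; simpa using hw
  have hur : u = r := by
    apply LWaux_strictMono.injOn _ _ (by rw [hue, ← hre])
    · simp only [Set.mem_Ici]; rw [abs_le] at huabs; linarith [huabs.1]
    · simp only [Set.mem_Ici]; linarith
  rw [hwu, hur]

noncomputable def LWg : ℂ → ℂ := fun w => w * Complex.exp w

lemma LWg_hasDerivAt (z : ℂ) : HasDerivAt LWg ((1 + z) * Complex.exp z) z := by
  have h := (hasDerivAt_id z).mul (Complex.hasDerivAt_exp z)
  have h2 : HasDerivAt LWg (1 * Complex.exp z + z * Complex.exp z) z := h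
  convert h2 using 1
  ring

lemma LWg_diff : Differentiable ℂ LWg :=
  fun z => (LWg_hasDerivAt z).differentiableAt

lemma LWdslope_diff (r : ℂ) : Differentiable ℂ (dslope LWg r) := by
  rw [← differentiableOn_univ] at *
  rw [Complex.differentiableOn_dslope (Filter.univ_mem)]
  exact LWg_diff.differentiableOn

lemma LWcauchy {x r : ℝ} (hr1 : -1 < r) (hr2 : r < 1) (hre : r * Real.exp r = x)
    (huniq : ∀ w : ℂ, ‖w‖ ≤ 1 → w * Complex.exp w = (x : ℂ) → w = (r : ℂ)) :
    (∫ θ in (0:ℝ)..2*π, Complex.exp (θ * Complex.I) ^ 2 * (1 + Complex.exp (θ * Complex.I)) *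
        Complex.exp (Complex.exp (θ * Complex.I)) /
        (Complex.exp (θ * Complex.I) * Complex.exp (Complex.exp (θ * Complex.I)) - (x:ℂ)))
      = 2 * (π : ℂ) * (r : ℂ) := by
  have h1r : (1 : ℂ) + (r : ℂ) ≠ 0 := by
    intro h
    have := congrArg Complex.re h
    simp at this
    linarith
  have hgr : LWg (r : ℂ) = (x : ℂ) := by
    unfold LWg
    rw [← Complex.ofReal_exp, ← Complex.ofReal_mul, hre]
  have hne : ∀ z : ℂ, ‖z‖ ≤ 1 → z ≠ (r : ℂ) → LWg z - (x : ℂ) ≠ 0 := by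
    intro z hz hzr h
    exact hzr (huniq z hz (by rw [← sub_eq_zero]; exact h))
  have hds : ∀ z : ℂ, ‖z‖ ≤ 1 → dslope LWg (r : ℂ) z ≠ 0 := by
    intro z hz
    by_cases h : z = (r : ℂ)
    · rw [h, dslope_same, (LWg_hasDerivAt _).deriv]
      exact mul_ne_zero h1r (Complex.exp_ne_zero _)
    · rw [dslope_of_ne _ h, slope_def_field, hgr]
      exact div_ne_zero (hne z hz h) (sub_ne_zero.mpr h)
  set F : ℂ → ℂ := fun z => z * (1 + z) * Complex.exp z / dslope LWg (r : ℂ) z with hF_def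
  have hnum : Differentiable ℂ (fun z : ℂ => z * (1 + z) * Complex.exp z) := by fun_prop
  have hF : DiffContOnCl ℂ F (Metric.ball 0 1) := by
    constructor
    · intro z hz
      have habs : ‖z‖ ≤ 1 := by
        simpa using (mem_ball_zero_iff.mp hz).le
      exact ((hnum z).div ((LWdslope_diff (r:ℂ)) z) (hds z habs)).differentiableWithinAt
    · rw [closure_ball (0:ℂ) one_ne_zero]
      intro z hz
      have habs : ‖z‖ ≤ 1 := by
        simpa using mem_closedBall_zero_iff.mp hz
      exact ((hnum z).continuousAt.div ((LWdslope_diff (r:ℂ)) z).continuousAt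
        (hds z habs)).continuousWithinAt
  have hrmem : (r : ℂ) ∈ Metric.ball (0:ℂ) 1 := by
    rw [mem_ball_zero_iff]
    simpa [Complex.norm_real, Real.norm_eq_abs, abs_lt] using And.intro hr1 hr2
  have hcau := hF.circleIntegral_sub_inv_smul hrmem
  have hFr : F (r : ℂ) = (r : ℂ) := by
    rw [hF_def]
    simp only
    rw [dslope_same, (LWg_hasDerivAt _).deriv,
      div_eq_iff (mul_ne_zero h1r (Complex.exp_ne_zero _))]
    ring
  rw [hFr] at hcau
  rw [circleIntegral] at hcau
  simp only [deriv_circleMap, circleMap, Complex.ofReal_one, one_mul, zero_add,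
    smul_eq_mul] at hcau
  have hptwise : ∀ θ : ℝ,
      Complex.exp (θ * Complex.I) * Complex.I *
        ((Complex.exp (θ * Complex.I) - (r:ℂ))⁻¹ * F (Complex.exp (θ * Complex.I)))
      = Complex.I * (Complex.exp (θ * Complex.I) ^ 2 * (1 + Complex.exp (θ * Complex.I)) *
          Complex.exp (Complex.exp (θ * Complex.I)) /
          (Complex.exp (θ * Complex.I) * Complex.exp (Complex.exp (θ * Complex.I)) - (x:ℂ))) := by
    intro θ
    set z := Complex.exp (θ * Complex.I) with hz_def
    have habs : ‖z‖ = 1 := Complex.norm_exp_ofReal_mul_I θ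
    have hzr : z ≠ (r : ℂ) := by
      intro h
      rw [h, Complex.norm_real, Real.norm_eq_abs] at habs
      have h2 : |r| < 1 := abs_lt.mpr ⟨hr1, hr2⟩
      rw [habs] at h2
      exact lt_irrefl 1 h2
    have hden : LWg z - (x : ℂ) ≠ 0 := hne z habs.le hzr
    have hzr' : z - (r : ℂ) ≠ 0 := sub_ne_zero.mpr hzr
    rw [hF_def]
    simp only
    rw [dslope_of_ne _ hzr, slope_def_field, hgr]
    unfold LWg at hden ⊢
    field_simp
  rw [intervalIntegral.integral_congr (fun θ _ => hptwise θ)] at hcau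
  rw [intervalIntegral.integral_const_mul] at hcau
  have h2 : 2 * (π:ℂ) * Complex.I * (r:ℂ) = Complex.I * (2 * (π:ℂ) * (r:ℂ)) := by ring
  rw [h2] at hcau
  exact mul_left_cancel₀ Complex.I_ne_zero hcau

lemma LWpoint (x θ : ℝ)
    (hden : Complex.exp ((θ:ℂ) * Complex.I) * Complex.exp (Complex.exp ((θ:ℂ) * Complex.I))
        - (x:ℂ) ≠ 0) :
    (Complex.exp ((θ:ℂ) * Complex.I) ^ 2 * (1 + Complex.exp ((θ:ℂ) * Complex.I)) *
        Complex.exp (Complex.exp ((θ:ℂ) * Complex.I)) /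
        (Complex.exp ((θ:ℂ) * Complex.I) * Complex.exp (Complex.exp ((θ:ℂ) * Complex.I)) -
          (x:ℂ))).re
    = 2 * ((Real.cos (3 * θ / 2) -
            x * Real.exp (-Real.cos θ) * Real.cos (5 * θ / 2 + Real.sin θ)) /
          (1 - 2 * x * Real.exp (-Real.cos θ) * Real.cos (θ + Real.sin θ) +
            x ^ 2 * Real.exp (-2 * Real.cos θ)) * Real.cos (θ / 2)) := by
  set c := Real.cos θ with hc_def
  set s := Real.sin θ with hs_def
  set w := Complex.exp ((θ:ℂ) * Complex.I) with hw_def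
  set E := Complex.exp w with hE_def
  set den := w * E - (x:ℂ) with hden_def
  set A := w ^ 2 * (1 + w) * E with hA_def
  set D := 1 - 2 * x * Real.exp (-c) * Real.cos (θ + s) + x ^ 2 * Real.exp (-2 * c) with hD_def
  have hwre : w.re = c := Complex.exp_ofReal_mul_I_re θ
  have hwim : w.im = s := Complex.exp_ofReal_mul_I_im θ
  set b := Complex.exp (-(θ:ℂ) * Complex.I) with hb_def
  have hcw : (starRingEnd ℂ) w = b := by
    rw [hw_def, hb_def, ← Complex.exp_conj]
    congr 1
    simp
  have hab : w * b = 1 := by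
    rw [hw_def, hb_def, ← Complex.exp_add]
    norm_num
  have hEE' : E * Complex.exp ((starRingEnd ℂ) w) = ((Real.exp (2 * c) : ℝ) : ℂ) := by
    rw [hE_def, ← Complex.exp_add, Complex.add_conj, hwre, Complex.ofReal_exp]
  have hconjden : (starRingEnd ℂ) den = b * Complex.exp ((starRingEnd ℂ) w) - (x:ℂ) := by
    rw [hden_def, map_sub, map_mul, hcw, Complex.conj_ofReal, hE_def, ← Complex.exp_conj, hcw]
  have hN : A * (starRingEnd ℂ) den =
      ((Real.exp (2 * c) : ℝ) : ℂ) * w + ((Real.exp (2 * c) : ℝ) : ℂ) * w ^ 2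
        - (x:ℂ) * (E * w ^ 2) - (x:ℂ) * (E * w ^ 3) := by
    rw [hconjden, hA_def]
    linear_combination ((w ^ 2 + w ^ 3) * b) * hEE'
      + (((Real.exp (2 * c) : ℝ) : ℂ) * (w + w ^ 2)) * hab
  have hw2 : w ^ 2 = Complex.exp (((2 * θ : ℝ) : ℂ) * Complex.I) := by
    rw [hw_def, ← Complex.exp_nat_mul]
    · congr 1; push_cast; ring
  have hw3 : w ^ 3 = Complex.exp (((3 * θ : ℝ) : ℂ) * Complex.I) := by
    rw [hw_def, ← Complex.exp_nat_mul]
    · congr 1; push_cast; ring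
  have hEw2 : E * w ^ 2 = Complex.exp (w + ((2 * θ : ℝ) : ℂ) * Complex.I) := by
    rw [hw2, hE_def, ← Complex.exp_add]
  have hEw3 : E * w ^ 3 = Complex.exp (w + ((3 * θ : ℝ) : ℂ) * Complex.I) := by
    rw [hw3, hE_def, ← Complex.exp_add]
  have hNre : (A * (starRingEnd ℂ) den).re =
      Real.exp (2 * c) * c + Real.exp (2 * c) * Real.cos (2 * θ)
        - x * (Real.exp c * Real.cos (s + 2 * θ)) - x * (Real.exp c * Real.cos (s + 3 * θ)) := by
    rw [hN, hEw2, hEw3]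
    simp [Complex.add_re, Complex.sub_re, Complex.exp_re, Complex.exp_im,
      Complex.add_im, hwre, hwim, hw2, hw3, Complex.exp_ofReal_mul_I_re]
  -- normSq of denominator
  have hwE : w * E = Complex.exp ((θ:ℂ) * Complex.I + w) := by
    rw [hE_def, ← Complex.exp_add, hw_def]
  have hdre : den.re = Real.exp c * Real.cos (θ + s) - x := by
    rw [hden_def, hwE]
    simp [Complex.sub_re, Complex.exp_re, Complex.add_re, Complex.add_im, hwre, hwim]
  have hdim : den.im = Real.exp c * Real.sin (θ + s) := by
    rw [hden_def, hwE]
    simp [Complex.sub_im, Complex.exp_im, Complex.add_re, Complex.add_im, hwre, hwim]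
  have hec : Real.exp (-c) * Real.exp c = 1 := by
    rw [← Real.exp_add]; norm_num
  have hec2 : Real.exp (-2 * c) * Real.exp c ^ 2 = 1 := by
    rw [pow_two, ← Real.exp_add, ← Real.exp_add, show -2 * c + (c + c) = 0 by ring,
      Real.exp_zero]
  have h2c : Real.exp (2 * c) = Real.exp c ^ 2 := by
    rw [pow_two, ← Real.exp_add, two_mul]
  have hnsq : Complex.normSq den = Real.exp c ^ 2 * D := by
    rw [Complex.normSq_apply, hdre, hdim, hD_def]
    have pyth := Real.sin_sq_add_cos_sq (θ + s)
    linear_combination Real.exp c ^ 2 * pyth + 2 * x * Real.cos (θ + s) * Real.exp c * hec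
      - x ^ 2 * hec2
  have hDpos : 0 < D := by
    have h1 : 0 < Complex.normSq den := Complex.normSq_pos.mpr hden
    rw [hnsq] at h1
    nlinarith [Real.exp_pos c, sq_nonneg (Real.exp c)]
  have hconjne : (starRingEnd ℂ) den ≠ 0 := by
    simpa using hden
  have key : A / den = A * (starRingEnd ℂ) den / ((Complex.normSq den : ℝ) : ℂ) := by
    rw [← Complex.mul_conj den, mul_div_mul_right _ _ hconjne]
  have keyre : (A / den).re = (A * (starRingEnd ℂ) den).re / Complex.normSq den := by
    rw [key, Complex.div_ofReal_re]
  -- product-to-sum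
  have pts1 : Real.cos (2 * θ) = 2 * Real.cos (3 * θ / 2) * Real.cos (θ / 2) - c := by
    have h1 := Real.cos_add (3 * θ / 2) (θ / 2)
    have h2 := Real.cos_sub (3 * θ / 2) (θ / 2)
    rw [show 3 * θ / 2 + θ / 2 = 2 * θ by ring] at h1
    rw [show 3 * θ / 2 - θ / 2 = θ by ring] at h2
    rw [hc_def]; linarith
  have pts2 : Real.cos (s + 3 * θ) = 2 * Real.cos (5 * θ / 2 + s) * Real.cos (θ / 2)
      - Real.cos (s + 2 * θ) := by
    have h1 := Real.cos_add (5 * θ / 2 + s) (θ / 2)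
    have h2 := Real.cos_sub (5 * θ / 2 + s) (θ / 2)
    rw [show 5 * θ / 2 + s + θ / 2 = s + 3 * θ by ring] at h1
    rw [show 5 * θ / 2 + s - θ / 2 = s + 2 * θ by ring] at h2
    linarith
  have hnum : Real.exp (2 * c) * c + Real.exp (2 * c) * Real.cos (2 * θ)
        - x * (Real.exp c * Real.cos (s + 2 * θ)) - x * (Real.exp c * Real.cos (s + 3 * θ))
      = 2 * ((Real.cos (3 * θ / 2) - x * Real.exp (-c) * Real.cos (5 * θ / 2 + s))
          * Real.cos (θ / 2)) * Real.exp c ^ 2 := by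
    rw [pts1, pts2, h2c]
    linear_combination (2 * Real.cos (5 * θ / 2 + s) * Real.cos (θ / 2) * x * Real.exp c) * hec
  rw [keyre, hNre, hnsq, hnum, mul_comm (Real.exp c ^ 2) D,
    mul_div_mul_right _ _ (pow_ne_zero 2 (Real.exp_ne_zero c))]
  ring

/-- Poisson's integral representation of the principal branch of Lambert W on
`(-1/e, e)`. -/
theorem lambertW_poisson (W : ℝ → ℝ)
    (hW : ∀ x ∈ Set.Ioo (-1 / Real.exp 1) (Real.exp 1), W x * Real.exp (W x) = x)
    (hWgt : ∀ x ∈ Set.Ioo (-1 / Real.exp 1) (Real.exp 1), W x > -1) :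
    ∀ x ∈ Set.Ioo (-1 / Real.exp 1) (Real.exp 1),
      W x = (2 / π) * ∫ θ in (0:ℝ)..π,
        (Real.cos (3 * θ / 2) -
            x * Real.exp (-Real.cos θ) * Real.cos (5 * θ / 2 + Real.sin θ)) /
          (1 - 2 * x * Real.exp (-Real.cos θ) * Real.cos (θ + Real.sin θ) +
            x ^ 2 * Real.exp (-2 * Real.cos θ)) * Real.cos (θ / 2) := by
  intro x hx
  obtain ⟨hx1, hx2⟩ := hx
  have hre : W x * Real.exp (W x) = x := hW x ⟨hx1, hx2⟩
  have hr1 : -1 < W x := hWgt x ⟨hx1, hx2⟩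
  set r := W x with hr_def
  have hr2 : r < 1 := by
    by_contra h
    push_neg at h
    have h1 : (1:ℝ) * Real.exp 1 ≤ r * Real.exp r :=
      LWaux_strictMono.monotoneOn (by norm_num) (by simp only [Set.mem_Ici]; linarith) h
    rw [hre] at h1
    rw [one_mul] at h1
    linarith
  have huniq : ∀ w : ℂ, ‖w‖ ≤ 1 → w * Complex.exp w = (x:ℂ) → w = (r:ℂ) :=
    fun w hw hwe => LWaux_root_unique hr1 hr2.le hre w hw hwe
  have hint := LWcauchy hr1 hr2 hre huniq
  have hden : ∀ θ : ℝ, Complex.exp ((θ:ℂ) * Complex.I) *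
      Complex.exp (Complex.exp ((θ:ℂ) * Complex.I)) - (x:ℂ) ≠ 0 := by
    intro θ h
    have habs : ‖Complex.exp ((θ:ℂ) * Complex.I)‖ = 1 :=
      Complex.norm_exp_ofReal_mul_I θ
    have h2 := huniq _ habs.le (by rwa [← sub_eq_zero])
    rw [h2, Complex.norm_real, Real.norm_eq_abs] at habs
    have h3 : |r| < 1 := abs_lt.mpr ⟨hr1, hr2⟩
    rw [habs] at h3
    exact lt_irrefl 1 h3
  set Cc : ℝ → ℂ := fun θ => Complex.exp ((θ:ℂ) * Complex.I) ^ 2 *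
      (1 + Complex.exp ((θ:ℂ) * Complex.I)) * Complex.exp (Complex.exp ((θ:ℂ) * Complex.I)) /
      (Complex.exp ((θ:ℂ) * Complex.I) * Complex.exp (Complex.exp ((θ:ℂ) * Complex.I)) - (x:ℂ))
    with hCc_def
  have hcont : Continuous Cc := by
    apply Continuous.div
    · fun_prop
    · fun_prop
    · exact hden
  have hr_int : (∫ θ in (0:ℝ)..2*π, (Cc θ).re) = 2*π*r := by
    have h1 : IntervalIntegrable Cc MeasureTheory.volume 0 (2*π) :=
      hcont.intervalIntegrable _ _
    have h2 := ContinuousLinearMap.intervalIntegral_comp_comm Complex.reCLM h1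
    simp only [Complex.reCLM_apply] at h2
    rw [h2, hint, show (2*(π:ℂ)*(r:ℂ)) = (((2*π*r : ℝ)):ℂ) by push_cast; ring,
      Complex.ofReal_re]
  have hsym : ∀ θ : ℝ, (Cc (2*π - θ)).re = (Cc θ).re := by
    intro θ
    have hz : Complex.exp (((2*π - θ : ℝ):ℂ) * Complex.I) =
        (starRingEnd ℂ) (Complex.exp ((θ:ℂ) * Complex.I)) := by
      rw [← Complex.exp_conj]
      have he : ((2*π - θ : ℝ):ℂ) * Complex.I =
          2*(π:ℂ)*Complex.I + (starRingEnd ℂ) ((θ:ℂ) * Complex.I) := by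
        rw [map_mul, Complex.conj_ofReal, Complex.conj_I]
        push_cast
        ring
      rw [he, Complex.exp_add, Complex.exp_two_pi_mul_I, one_mul]
    have hconj : Cc (2*π - θ) = (starRingEnd ℂ) (Cc θ) := by
      rw [hCc_def]
      simp only
      rw [hz, Complex.exp_conj]
      rw [map_div₀, map_mul, map_mul, map_sub, map_mul, map_pow, map_add, map_one,
        Complex.conj_ofReal]
    rw [hconj, Complex.conj_re]
  have hcr : Continuous (fun θ : ℝ => (Cc θ).re) := Complex.continuous_re.comp hcont
  have hfold : (∫ θ in (0:ℝ)..2*π, (Cc θ).re) = 2 * ∫ θ in (0:ℝ)..π, (Cc θ).re := by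
    have h1 : (∫ θ in (0:ℝ)..2*π, (Cc θ).re)
        = (∫ θ in (0:ℝ)..π, (Cc θ).re) + ∫ θ in π..2*π, (Cc θ).re :=
      (intervalIntegral.integral_add_adjacent_intervals (hcr.intervalIntegrable _ _)
        (hcr.intervalIntegrable _ _)).symm
    have h2 : (∫ θ in (0:ℝ)..π, (Cc (2*π - θ)).re) = ∫ θ in π..2*π, (Cc θ).re := by
      rw [intervalIntegral.integral_comp_sub_left (fun θ => (Cc θ).re) (2*π)]
      norm_num
      rw [show 2*π - π = π by ring]
    have h3 : (∫ θ in (0:ℝ)..π, (Cc (2*π - θ)).re) = ∫ θ in (0:ℝ)..π, (Cc θ).re :=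
      intervalIntegral.integral_congr (fun θ _ => hsym θ)
    rw [h1, ← h2, h3]
    ring
  have hTptwise : ∀ θ : ℝ, (Cc θ).re =
      2 * ((Real.cos (3 * θ / 2) -
            x * Real.exp (-Real.cos θ) * Real.cos (5 * θ / 2 + Real.sin θ)) /
          (1 - 2 * x * Real.exp (-Real.cos θ) * Real.cos (θ + Real.sin θ) +
            x ^ 2 * Real.exp (-2 * Real.cos θ)) * Real.cos (θ / 2)) :=
    fun θ => LWpoint x θ (hden θ)
  have hkey : 2*π*r = 2 * ∫ θ in (0:ℝ)..π, (Cc θ).re := by rw [← hfold, hr_int]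
  rw [intervalIntegral.integral_congr (fun θ _ => hTptwise θ),
    intervalIntegral.integral_const_mul] at hkey
  have hπ : (0:ℝ) < π := Real.pi_pos
  have hI : (∫ θ in (0:ℝ)..π,
      (Real.cos (3 * θ / 2) -
            x * Real.exp (-Real.cos θ) * Real.cos (5 * θ / 2 + Real.sin θ)) /
          (1 - 2 * x * Real.exp (-Real.cos θ) * Real.cos (θ + Real.sin θ) +
            x ^ 2 * Real.exp (-2 * Real.cos θ)) * Real.cos (θ / 2)) = π * r / 2 := by
    linarith
  rw [hI]
  field_simp
end

section
/- Let W : ℝ → ℝ satisfy W(x) * exp(W(x)) = x for all x ∈ (-1/e, e), with W real-valued and W(x) > -1. Define R(θ) = 1 - x*exp(-cos θ)*cos(θ + sin θ) and I(θ) = x*exp(-cos θ)*sin(θ + sin θ). Then for all x ∈ (-1/e, e), W(x) = (1/(2π)) * ∫ from 0 to π of log(R(θ)^2 + I(θ)^2) dθ. -/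
open Real Set intervalIntegral

private lemma bs_strictMono : StrictMonoOn (fun t : ℝ => t * Real.exp t) (Set.Ici (-1 : ℝ)) := by
  have hd : ∀ t : ℝ, HasDerivAt (fun t : ℝ => t * Real.exp t) ((1 + t) * Real.exp t) t := by
    intro t
    have := (hasDerivAt_id t).mul (Real.hasDerivAt_exp t)
    exact this.congr_deriv (by simp only [id]; ring)
  apply strictMonoOn_of_deriv_pos (convex_Ici _)
  · exact (continuous_id.mul Real.continuous_exp).continuousOn
  · intro t ht
    rw [interior_Ici] at ht
    rw [(hd t).deriv]
    have : (0:ℝ) < 1 + t := by linarith [mem_Ioi.mp ht]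
    positivity

private lemma bs_hasDerivAt_log_cabs {f : ℝ → ℂ} {f' : ℂ} {t : ℝ} (hf : HasDerivAt f f' t)
    (h0 : f t ≠ 0) :
    HasDerivAt (fun s => Real.log (‖f s‖)) ((f' / f t).re) t := by
  have hre : HasDerivAt (fun s => (f s).re) f'.re t :=
    (Complex.reCLM.hasFDerivAt.comp_hasDerivAt t hf)
  have him : HasDerivAt (fun s => (f s).im) f'.im t :=
    (Complex.imCLM.hasFDerivAt.comp_hasDerivAt t hf)
  have hnsq : HasDerivAt (fun s => (f s).re ^ 2 + (f s).im ^ 2)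
      (2 * (f t).re * f'.re + 2 * (f t).im * f'.im) t := by
    have h1 := (hre.pow 2).add (him.pow 2)
    exact h1.congr_deriv (by ring)
  have hpos : (0:ℝ) < (f t).re ^ 2 + (f t).im ^ 2 := by
    have := Complex.normSq_pos.mpr h0
    rw [Complex.normSq_apply] at this
    nlinarith [this]
  have hlog := (hnsq.log (ne_of_gt hpos)).div_const 2
  have heq : (fun s => Real.log (‖f s‖))
      = fun s => Real.log ((f s).re ^ 2 + (f s).im ^ 2) / 2 := by
    funext s
    rw [Complex.norm_def, Real.log_sqrt (Complex.normSq_nonneg _), Complex.normSq_apply]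
    ring_nf
  rw [heq]
  refine hlog.congr_deriv ?_
  rw [Complex.div_re, Complex.normSq_apply]
  have hne : (f t).re * (f t).re + (f t).im * (f t).im ≠ 0 := by nlinarith [hpos]
  field_simp

private lemma bs_zero_unique {x w : ℝ} (hx1 : -1 / Real.exp 1 < x)
    (hw : w * Real.exp w = x) (hw1 : -1 < w) :
    ∀ z : ℂ, ‖z‖ ≤ 1 → z * Complex.exp z = (x : ℂ) → z = (w : ℂ) := by
  intro z hz hzx
  set a := z.re with ha
  set b := z.im with hb
  have hre : a * (Real.exp a * Real.cos b) - b * (Real.exp a * Real.sin b) = x := by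
    have := congrArg Complex.re hzx
    simpa [Complex.mul_re, Complex.exp_re, Complex.exp_im] using this
  have him : a * (Real.exp a * Real.sin b) + b * (Real.exp a * Real.cos b) = 0 := by
    have := congrArg Complex.im hzx
    simpa [Complex.mul_im, Complex.exp_re, Complex.exp_im] using this
  have hale : -1 ≤ a := by
    have h1 : |a| ≤ 1 := le_trans (Complex.abs_re_le_norm z) hz
    linarith [abs_le.mp h1 |>.1]
  have hble : |b| ≤ 1 := le_trans (Complex.abs_im_le_norm z) hz
  have hea : Real.exp (-1) ≤ Real.exp a := Real.exp_le_exp.mpr hale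
  by_cases hb0 : b = 0
  · -- real case
    have hzreal : z = (a : ℂ) := Complex.ext rfl (by simp [hb0, ← hb])
    have haa : a * Real.exp a = x := by
      rw [hb0] at hre; simpa using hre
    have : a = w := by
      apply bs_strictMono.injOn (mem_Ici.mpr hale) (mem_Ici.mpr hw1.le)
      simp only
      rw [haa, hw]
    rw [hzreal, this]
  · exfalso
    have hsb : x * Real.sin b = -(Real.exp a * b) := by
      linear_combination (-(Real.sin b)) * hre + (Real.cos b) * him -
        (Real.exp a * b) * (Real.sin_sq_add_cos_sq b)
    have hxlow : -Real.exp (-1) < x := by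
      have : -1 / Real.exp 1 = -Real.exp (-1) := by rw [Real.exp_neg]; ring
      linarith [hx1, this.symm.le, this.ge]
    rcases lt_or_gt_of_ne hb0 with hbneg | hbpos
    · -- b < 0 : sin b < 0, b < sin b
      have hsinneg : Real.sin b < 0 := by
        apply Real.sin_neg_of_neg_of_neg_pi_lt hbneg
        nlinarith [abs_le.mp hble |>.1, Real.pi_gt_three]
      have hsingt : b < Real.sin b := by
        have := Real.sin_lt (x := -b) (by linarith)
        rw [Real.sin_neg] at this
        linarith
      have h1 : Real.exp (-1) * (-Real.sin b) < Real.exp a * (-b) := by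
        have h2 : Real.exp (-1) * (-Real.sin b) < Real.exp (-1) * (-b) := by
          apply mul_lt_mul_of_pos_left _ (Real.exp_pos _)
          linarith
        have h3 : Real.exp (-1) * (-b) ≤ Real.exp a * (-b) :=
          mul_le_mul_of_nonneg_right hea (by linarith)
        linarith
      have h4 : x * Real.sin b < (-Real.exp (-1)) * Real.sin b := by
        nlinarith [hxlow, hsinneg]
      rw [hsb] at h4
      nlinarith [h1, h4]
    · -- b > 0
      have hsinpos : 0 < Real.sin b := by
        apply Real.sin_pos_of_pos_of_lt_pi hbpos
        nlinarith [abs_le.mp hble |>.2, Real.pi_gt_three]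
      have hsinlt : Real.sin b < b := Real.sin_lt hbpos
      have h1 : Real.exp (-1) * Real.sin b < Real.exp a * b := by
        have h2 : Real.exp (-1) * Real.sin b < Real.exp (-1) * b :=
          mul_lt_mul_of_pos_left hsinlt (Real.exp_pos _)
        have h3 : Real.exp (-1) * b ≤ Real.exp a * b :=
          mul_le_mul_of_nonneg_right hea (by linarith)
        linarith
      have h4 : (-Real.exp (-1)) * Real.sin b < x * Real.sin b := by
        nlinarith [hxlow, hsinpos]
      rw [hsb] at h4
      nlinarith [h1, h4]

noncomputable def bsh (x : ℝ) (z : ℂ) : ℂ := z - (x : ℂ) * Complex.exp (-z)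

noncomputable def bsH (x w : ℝ) (z : ℂ) : ℂ :=
  (1 - (w : ℂ) * z) * dslope (bsh x) (w : ℂ) z

lemma bsh_diff (x : ℝ) : Differentiable ℂ (bsh x) := by
  unfold bsh
  exact differentiable_id.sub ((Complex.differentiable_exp.comp differentiable_neg).const_mul _)

lemma bsh_w_eq_zero {x w : ℝ} (hw : w * Real.exp w = x) : bsh x (w : ℂ) = 0 := by
  unfold bsh
  have hx : (x : ℂ) = (w : ℂ) * Complex.exp (w : ℂ) := by
    rw [← hw]
    push_cast [Complex.ofReal_exp]
    ring
  rw [hx, mul_assoc, ← Complex.exp_add]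
  simp

lemma bsh_factor {x w : ℝ} (hw : w * Real.exp w = x) (z : ℂ) :
    (z - (w : ℂ)) * dslope (bsh x) (w : ℂ) z = bsh x z := by
  have := sub_smul_dslope (bsh x) (w : ℂ) z
  rw [smul_eq_mul] at this
  rw [this, bsh_w_eq_zero hw, sub_zero]

lemma bsh_deriv (x : ℝ) (z : ℂ) :
    deriv (bsh x) z = 1 + (x : ℂ) * Complex.exp (-z) := by
  unfold bsh
  have h1 : HasDerivAt (fun u : ℂ => u - (x : ℂ) * Complex.exp (-u))
      (1 - (x : ℂ) * (Complex.exp (-z) * (-1))) z := by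
    have he : HasDerivAt (fun u : ℂ => Complex.exp (-u)) (Complex.exp (-z) * (-1)) z := by
      have := (Complex.hasDerivAt_exp (-z)).comp z ((hasDerivAt_id z).neg)
      simpa [Function.comp_def] using this
    exact (hasDerivAt_id z).sub (he.const_mul _)
  rw [h1.deriv]
  ring

lemma bsG_diff {x w : ℝ} : Differentiable ℂ (dslope (bsh x) (w : ℂ)) := by
  intro z
  rcases eq_or_ne z (w : ℂ) with rfl | hne
  · obtain ⟨p, hp⟩ := ((bsh_diff x).analyticAt (w : ℂ))
    exact (HasFPowerSeriesAt.has_fpower_series_dslope_fslope hp).analyticAt.differentiableAt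
  · exact (differentiableAt_dslope_of_ne hne).mpr (bsh_diff x z)

lemma bsH_diff (x w : ℝ) : Differentiable ℂ (bsH x w) := by
  unfold bsH
  exact (differentiable_const _ |>.sub ((differentiable_const _).mul differentiable_id)).mul bsG_diff

lemma bsH_ne_zero {x w : ℝ} (hx1 : -1 / Real.exp 1 < x)
    (hw : w * Real.exp w = x) (hw1 : -1 < w) (hw2 : w < 1) :
    ∀ z : ℂ, ‖z‖ ≤ 1 → bsH x w z ≠ 0 := by
  intro z hz
  have hwabs : |w| < 1 := abs_lt.mpr ⟨hw1, hw2⟩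
  unfold bsH
  apply mul_ne_zero
  · intro h
    have : ‖(w : ℂ) * z‖ < 1 := by
      rw [norm_mul, Complex.norm_real, Real.norm_eq_abs]
      rcases eq_or_lt_of_le (norm_nonneg z) with h0 | h0
      · rw [← h0, mul_zero]; norm_num
      · calc |w| * ‖z‖ ≤ |w| * 1 := by
              apply mul_le_mul_of_nonneg_left hz (abs_nonneg _)
            _ < 1 := by rw [mul_one]; exact hwabs
    rw [sub_eq_zero] at h
    rw [← h] at this
    simp at this
  · intro hG
    rcases eq_or_ne z (w : ℂ) with rfl | hne
    · rw [dslope_same] at hG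
      rw [bsh_deriv] at hG
      have : (x : ℂ) * Complex.exp (-(w:ℂ)) = (w : ℂ) := by
        have hx : (x : ℂ) = (w : ℂ) * Complex.exp (w : ℂ) := by
          rw [← hw]; push_cast [Complex.ofReal_exp]; ring
        rw [hx, mul_assoc, ← Complex.exp_add]
        simp
      rw [this] at hG
      have : ((1 : ℂ) + (w : ℂ)).re = 1 + w := by simp
      rw [hG] at this
      simp at this
      linarith
    · have hzero : bsh x z = 0 := by
        rw [← bsh_factor hw z, hG, mul_zero]
      have hzx : z * Complex.exp z = (x : ℂ) := by
        unfold bsh at hzero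
        have h2 : z = (x : ℂ) * Complex.exp (-z) := by
          rw [sub_eq_zero] at hzero; exact hzero
        calc z * Complex.exp z = (x : ℂ) * Complex.exp (-z) * Complex.exp z := by rw [← h2]
          _ = (x : ℂ) * Complex.exp (-z + z) := by rw [mul_assoc, Complex.exp_add]
          _ = (x : ℂ) := by simp
      exact hne (bs_zero_unique hx1 hw hw1 z hz hzx)

lemma bsH_deriv_diff (x w : ℝ) : Differentiable ℂ (deriv (bsH x w)) := by
  have h : AnalyticOnNhd ℂ (bsH x w) Set.univ := fun z _ => (bsH_diff x w).analyticAt z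
  intro z
  exact ((h.deriv) z (Set.mem_univ z)).differentiableAt

lemma bsH_zero_val {x w : ℝ} (hw : w * Real.exp w = x) (hwne : w ≠ 0) :
    bsH x w 0 = Complex.exp (w : ℂ) := by
  unfold bsH
  have hwc : (w : ℂ) ≠ 0 := by exact_mod_cast hwne
  have hne : (0 : ℂ) ≠ (w : ℂ) := fun h => hwc h.symm
  rw [dslope_of_ne _ hne, slope_def_field]
  have h0 : bsh x 0 = -(x : ℂ) := by simp [bsh]
  rw [bsh_w_eq_zero hw, h0]
  have hx : (x : ℂ) = (w : ℂ) * Complex.exp (w : ℂ) := by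
    rw [← hw]; push_cast [Complex.ofReal_exp]; ring
  field_simp [hx]
  rw [hx]
  ring

lemma bs_key {x w : ℝ} (hx1 : -1 / Real.exp 1 < x) (hw : w * Real.exp w = x)
    (hw1 : -1 < w) (hw2 : w < 1) (hwne : w ≠ 0) :
    ∫ θ in (0:ℝ)..(2*π), Real.log (‖bsH x w (circleMap 0 1 θ)‖)
      = 2 * π * w := by
  have hHd : Differentiable ℂ (bsH x w) := bsH_diff x w
  have hHc : Continuous (bsH x w) := hHd.continuous
  have hH'd : Differentiable ℂ (deriv (bsH x w)) := bsH_deriv_diff x w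
  have hH'c : Continuous (deriv (bsH x w)) := hH'd.continuous
  have hne : ∀ z : ℂ, ‖z‖ ≤ 1 → bsH x w z ≠ 0 := bsH_ne_zero hx1 hw hw1 hw2
  -- bounds on the closed unit ball
  obtain ⟨M, hM⟩ := (isCompact_closedBall (0:ℂ) 1).exists_bound_of_continuousOn
    hH'c.continuousOn
  obtain ⟨z₀, hz₀K, hmin⟩ := (isCompact_closedBall (0:ℂ) 1).exists_isMinOn
    ⟨0, by simp⟩ ((continuous_norm.comp hHc).continuousOn)
  set m := ‖bsH x w z₀‖ with hm
  have hz₀abs : ‖z₀‖ ≤ 1 := by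
    simpa [Complex.dist_eq] using mem_closedBall_iff_norm.mp hz₀K
  have hmpos : 0 < m := by
    rw [hm]
    exact (norm_pos_iff).mpr (hne z₀ hz₀abs)
  have hmle : ∀ z : ℂ, ‖z‖ ≤ 1 → m ≤ ‖bsH x w z‖ := by
    intro z hz
    exact hmin (by simpa [Complex.dist_eq, mem_closedBall_iff_norm] using hz)
  have hMnn : 0 ≤ M := le_trans (norm_nonneg _) (hM 0 (by simp))
  -- the function u
  set u : ℝ → ℝ := fun r => ∫ θ in (0:ℝ)..(2*π),
      Real.log (‖bsH x w (circleMap 0 r θ)‖) with hu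
  -- continuity of u on [0,1]
  have hCircCont : Continuous (fun p : ℝ × ℝ => circleMap 0 p.1 p.2) := by
    simp only [circleMap_zero]
    exact (Complex.continuous_ofReal.comp continuous_fst).mul
      (Complex.continuous_exp.comp ((Complex.continuous_ofReal.comp continuous_snd).mul
        continuous_const))
  have ucont : ContinuousOn u (Icc 0 1) := by
    rw [continuousOn_iff_continuous_restrict]
    have : Continuous (Function.uncurry (fun (r : Icc (0:ℝ) 1) (θ : ℝ) =>
        Real.log (‖bsH x w (circleMap 0 r.1 θ)‖))) := by
      rw [continuous_iff_continuousAt]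
      intro p
      have habs : Continuous (fun p : Icc (0:ℝ) 1 × ℝ =>
          ‖bsH x w (circleMap 0 p.1.1 p.2)‖) :=
        continuous_norm.comp (hHc.comp (hCircCont.comp
          ((continuous_subtype_val.comp continuous_fst).prodMk continuous_snd)))
      apply (Real.continuousAt_log _).comp habs.continuousAt
      apply (norm_ne_zero_iff).mpr
      apply hne
      rw [norm_circleMap_zero]
      rcases p.1.2 with ⟨h0, h1⟩
      rw [abs_of_nonneg h0]
      exact h1
    exact intervalIntegral.continuous_parametric_intervalIntegral_of_continuous' this 0 (2*π)
  -- derivative of u is 0 on [0,1)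
  have uderiv : ∀ r₀ ∈ Ico (0:ℝ) 1, HasDerivAt u 0 r₀ := by
    intro r₀ hr₀
    obtain ⟨hr₀0, hr₀1⟩ := hr₀
    set F' : ℝ → ℝ → ℝ := fun r θ =>
      ((Complex.exp (θ * Complex.I) * deriv (bsH x w) (circleMap 0 r θ)) /
        bsH x w (circleMap 0 r θ)).re with hF'
    have hball : ∀ r ∈ Metric.ball r₀ (1 - r₀), |r| < 1 := by
      intro r hr
      rw [Metric.mem_ball, Real.dist_eq] at hr
      rw [abs_lt] at hr ⊢
      constructor <;> nlinarith [hr.1, hr.2]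
    have hcabs : ∀ (r : ℝ), ∀ θ : ℝ, ‖circleMap 0 r θ‖ = |r| := fun r θ =>
      norm_circleMap_zero r θ
    -- pointwise derivative
    have h_diff : ∀ θ : ℝ, ∀ r ∈ Metric.ball r₀ (1 - r₀),
        HasDerivAt (fun r => Real.log (‖bsH x w (circleMap 0 r θ)‖)) (F' r θ) r := by
      intro θ r hr
      have hinner : HasDerivAt (fun r : ℝ => bsH x w (circleMap 0 r θ))
          (Complex.exp (θ * Complex.I) * deriv (bsH x w) (circleMap 0 r θ)) r := by
        have h1 : HasDerivAt (fun ζ : ℂ => bsH x w (ζ * Complex.exp (θ * Complex.I)))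
            (deriv (bsH x w) ((r : ℂ) * Complex.exp (θ * Complex.I)) *
              Complex.exp (θ * Complex.I)) (r : ℂ) := by
          have hmul : HasDerivAt (fun ζ : ℂ => ζ * Complex.exp (θ * Complex.I))
              (Complex.exp (θ * Complex.I)) (r : ℂ) := by
            simpa using (hasDerivAt_id ((r : ℂ))).mul_const (Complex.exp (θ * Complex.I))
          exact ((hHd _).hasDerivAt.comp _ hmul)
        have h2 := h1.comp_ofReal
        simp only [circleMap_zero]
        convert h2 using 1
        ring
      have h0 : bsH x w (circleMap 0 r θ) ≠ 0 := by
        apply hne; rw [hcabs]; exact (hball r hr).le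
      exact bs_hasDerivAt_log_cabs hinner h0
    have key := intervalIntegral.hasDerivAt_integral_of_dominated_loc_of_deriv_le
      (F := fun r θ => Real.log (‖bsH x w (circleMap 0 r θ)‖))
      (F' := F') (x₀ := r₀) (s := Metric.ball r₀ (1 - r₀)) (a := 0) (b := 2*π) (bound := fun _ => M / m)
      (μ := MeasureTheory.volume)
      (Metric.ball_mem_nhds r₀ (by linarith : (0:ℝ) < 1 - r₀))
      (Filter.Eventually.of_forall (fun r =>
        (Real.measurable_log.comp
          (continuous_norm.comp (hHc.comp (continuous_circleMap 0 r))).measurable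
          ).aestronglyMeasurable))
      (by
        apply Continuous.intervalIntegrable
        rw [continuous_iff_continuousAt]
        intro θ
        apply (Real.continuousAt_log ?_).comp
          ((continuous_norm.comp (hHc.comp (continuous_circleMap 0 r₀))).continuousAt)
        apply (norm_ne_zero_iff).mpr
        apply hne
        rw [hcabs, abs_of_nonneg hr₀0]
        exact hr₀1.le)
      (by
        apply Continuous.aestronglyMeasurable
        apply Complex.continuous_re.comp
        apply Continuous.div
        · exact (Complex.continuous_exp.comp (Complex.continuous_ofReal.mul
            continuous_const)).mul (hH'c.comp (continuous_circleMap 0 r₀))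
        · exact hHc.comp (continuous_circleMap 0 r₀)
        · intro θ
          apply hne
          rw [hcabs, abs_of_nonneg hr₀0]
          exact hr₀1.le)
      (Filter.Eventually.of_forall (fun θ => fun _ => by
        intro r hr
        have h0 : ‖bsH x w (circleMap 0 r θ)‖ ≠ 0 := by
          apply (norm_ne_zero_iff).mpr
          apply hne; rw [hcabs]; exact (hball r hr).le
        calc ‖F' r θ‖ ≤ ‖(Complex.exp (θ * Complex.I) *
              deriv (bsH x w) (circleMap 0 r θ)) / bsH x w (circleMap 0 r θ)‖ := by
              exact Complex.abs_re_le_norm _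
          _ = ‖deriv (bsH x w) (circleMap 0 r θ)‖ /
              ‖bsH x w (circleMap 0 r θ)‖ := by
              rw [norm_div, norm_mul, Complex.norm_exp_ofReal_mul_I, one_mul]
          _ ≤ M / m := by
              apply div_le_div₀ hMnn
              · have : circleMap 0 r θ ∈ Metric.closedBall (0:ℂ) 1 := by
                  simp [Complex.dist_eq, hcabs, (hball r hr).le]
                exact hM _ this
              · exact hmpos
              · apply hmle; rw [hcabs]; exact (hball r hr).le))
      (intervalIntegrable_const)
      (Filter.Eventually.of_forall (fun θ => fun _ => h_diff θ))
    obtain ⟨-, hderiv⟩ := key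
    -- show the integral of F' r₀ is 0
    have hint0 : ∫ θ in (0:ℝ)..(2*π), F' r₀ θ = 0 := by
      rcases eq_or_lt_of_le hr₀0 with h0 | hpos
      · -- r₀ = 0
        have h00 : r₀ = 0 := h0.symm
        subst h00
        set K := deriv (bsH x w) 0 / bsH x w 0 with hK
        have hFeq : ∀ θ : ℝ, F' 0 θ = Real.cos θ * K.re - Real.sin θ * K.im := by
          intro θ
          have hc0 : circleMap (0:ℂ) 0 θ = 0 := by simp [circleMap]
          simp only [hF', hc0, mul_div_assoc, ← hK]
          rw [Complex.mul_re, Complex.exp_ofReal_mul_I_re, Complex.exp_ofReal_mul_I_im]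
        simp only [hFeq]
        rw [intervalIntegral.integral_sub
            ((show Continuous fun θ => Real.cos θ * K.re from
              Real.continuous_cos.mul continuous_const).intervalIntegrable
              (μ := MeasureTheory.volume) 0 (2*π))
            ((show Continuous fun θ => Real.sin θ * K.im from
              Real.continuous_sin.mul continuous_const).intervalIntegrable
              (μ := MeasureTheory.volume) 0 (2*π)),
          intervalIntegral.integral_mul_const, intervalIntegral.integral_mul_const,
          integral_cos, integral_sin]
        simp [Real.sin_two_pi, Real.cos_two_pi]
      · -- r₀ > 0
        set q : ℂ → ℂ := fun z => z * (deriv (bsH x w) z / bsH x w z) with hq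
        have habs_le : ∀ z : ℂ, z ∈ Metric.closedBall (0:ℂ) r₀ → ‖z‖ ≤ 1 := by
          intro z hz
          rw [Metric.mem_closedBall, Complex.dist_eq, sub_zero] at hz
          exact le_trans hz hr₀1.le
        have hdc : DiffContOnCl ℂ q (Metric.ball 0 r₀) := by
          constructor
          · intro z hz
            have hzb : ‖z‖ ≤ 1 := habs_le z (Metric.ball_subset_closedBall hz)
            exact (differentiableAt_id.mul ((hH'd z).div (hHd z) (hne z hzb))).differentiableWithinAt
          · rw [closure_ball (0:ℂ) (ne_of_gt hpos)]
            intro z hz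
            have hzb : ‖z‖ ≤ 1 := habs_le z hz
            exact (continuousAt_id.mul ((hH'c.continuousAt).div (hHc.continuousAt)
              (hne z hzb))).continuousWithinAt
        have hcauchy := hdc.circleIntegral_sub_inv_smul (Metric.mem_ball_self hpos)
        have hq0 : q 0 = 0 := by simp [hq]
        rw [hq0, smul_zero] at hcauchy
        rw [circleIntegral] at hcauchy
        have hinteq : ∀ θ : ℝ, deriv (circleMap 0 r₀) θ •
            (circleMap 0 r₀ θ - 0)⁻¹ • q (circleMap 0 r₀ θ)
            = Complex.I * q (circleMap 0 r₀ θ) := by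
          intro θ
          have hcne : circleMap (0:ℂ) r₀ θ ≠ 0 := circleMap_ne_center (ne_of_gt hpos)
          rw [deriv_circleMap, smul_eq_mul, smul_eq_mul, sub_zero]
          have : circleMap 0 r₀ θ * Complex.I * ((circleMap 0 r₀ θ)⁻¹ * q (circleMap 0 r₀ θ))
              = (circleMap 0 r₀ θ * (circleMap 0 r₀ θ)⁻¹) * (Complex.I * q (circleMap 0 r₀ θ)) := by
            ring
          rw [this, mul_inv_cancel₀ hcne, one_mul]
        simp only [hinteq] at hcauchy
        rw [intervalIntegral.integral_const_mul] at hcauchy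
        have hgint : ∫ θ in (0:ℝ)..(2*π), q (circleMap 0 r₀ θ) = 0 := by
          rcases mul_eq_zero.mp hcauchy with h | h
          · exact absurd h Complex.I_ne_zero
          · exact h
        have hqcont : Continuous fun θ : ℝ => q (circleMap 0 r₀ θ) := by
          apply Continuous.mul (continuous_circleMap 0 r₀)
          apply Continuous.div (hH'c.comp (continuous_circleMap 0 r₀))
            (hHc.comp (continuous_circleMap 0 r₀))
          intro θ
          apply hne
          rw [norm_circleMap_zero, abs_of_nonneg hr₀0]
          exact hr₀1.le
        have hre : ∫ θ in (0:ℝ)..(2*π), (q (circleMap 0 r₀ θ)).re = 0 := by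
          have := Complex.reCLM.intervalIntegral_comp_comm
            (hqcont.intervalIntegrable (μ := MeasureTheory.volume) 0 (2*π))
          simp only [Complex.reCLM_apply] at this
          rw [this, hgint]
          simp
        have hFeq : ∀ θ : ℝ, F' r₀ θ = r₀⁻¹ * (q (circleMap 0 r₀ θ)).re := by
          intro θ
          have hcm : circleMap (0:ℂ) r₀ θ = (r₀ : ℂ) * Complex.exp (θ * Complex.I) := by
            simp [circleMap]
          have hr₀ne : ((r₀ : ℂ)) ≠ 0 := by exact_mod_cast (ne_of_gt hpos)
          have hgen : ∀ A B e : ℂ, e * A / B = (r₀ : ℂ)⁻¹ * ((r₀ : ℂ) * e * (A / B)) := by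
            intro A B e
            rw [← mul_assoc, ← mul_assoc, inv_mul_cancel₀ hr₀ne, one_mul, mul_div_assoc]
          have hthis : Complex.exp (θ * Complex.I) * deriv (bsH x w) (circleMap 0 r₀ θ) /
              bsH x w (circleMap 0 r₀ θ)
              = (r₀ : ℂ)⁻¹ * q (circleMap 0 r₀ θ) := by
            simp only [hq]
            rw [hcm]
            exact hgen _ _ _
          simp only [hF', hthis]
          rw [← Complex.ofReal_inv, Complex.re_ofReal_mul]
        simp only [hFeq]
        rw [intervalIntegral.integral_const_mul, hre, mul_zero]
    rw [hint0] at hderiv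
    exact hderiv
  -- value at 0
  have u0 : u 0 = 2 * π * w := by
    rw [hu]
    simp only [circleMap_zero]
    have : ∀ θ : ℝ, Real.log (‖bsH x w ((0:ℝ) * Complex.exp (θ * Complex.I))‖) = w := by
      intro θ
      have h0 : ((0:ℝ):ℂ) * Complex.exp (θ * Complex.I) = 0 := by simp
      rw [h0, bsH_zero_val hw hwne, Complex.norm_exp]
      simp [Real.log_exp]
    simp only [this]
    rw [intervalIntegral.integral_const]
    simp [mul_comm]
  -- conclude
  have := constant_of_has_deriv_right_zero (f := u) (a := 0) (b := 1) ucont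
    (fun r hr => ((uderiv r hr).hasDerivWithinAt))
  have h1 := this 1 (by norm_num)
  rw [u0] at h1
  exact h1

lemma bs_pointwise {x w : ℝ} (hw : w * Real.exp w = x) (θ : ℝ) :
    (1 - x * Real.exp (-Real.cos θ) * Real.cos (θ + Real.sin θ)) ^ 2 +
      (x * Real.exp (-Real.cos θ) * Real.sin (θ + Real.sin θ)) ^ 2
    = ‖bsH x w (circleMap 0 1 θ)‖ ^ 2 := by
  set z := Complex.exp ((θ : ℂ) * Complex.I) with hzdef
  have hz1 : ‖z‖ = 1 := Complex.norm_exp_ofReal_mul_I θ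
  have hcirc : circleMap 0 1 θ = z := by simp [circleMap, hzdef]
  have hnormsq : z * (starRingEnd ℂ) z = 1 := by
    rw [Complex.mul_conj]
    have : Complex.normSq z = 1 := by
      rw [← Complex.sq_norm, hz1]; norm_num
    rw [this]; norm_num
  have habs_eq : ‖(1 : ℂ) - (w : ℂ) * z‖ = ‖z - (w : ℂ)‖ := by
    have h1 : (1 : ℂ) - (w : ℂ) * z = z * ((starRingEnd ℂ) (z - (w : ℂ))) := by
      rw [map_sub, Complex.conj_ofReal, mul_sub, hnormsq]
      ring
    rw [h1, norm_mul, hz1, one_mul, Complex.norm_conj (z - (w:ℂ))]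
  have hstep1 : ‖bsH x w z‖ = ‖bsh x z‖ := by
    rw [← bsh_factor hw z]
    unfold bsH
    rw [norm_mul, norm_mul, habs_eq]
  -- step 2
  have h2 : (θ : ℂ) * Complex.I + -((θ : ℂ) * Complex.I) = 0 := by ring
  have hv : bsh x z * Complex.exp (-((θ : ℂ) * Complex.I))
      = 1 - (x : ℂ) * Complex.exp (-(z + (θ : ℂ) * Complex.I)) := by
    show (z - (x : ℂ) * Complex.exp (-z)) * Complex.exp (-((θ : ℂ) * Complex.I)) = _
    rw [sub_mul, mul_assoc, ← Complex.exp_add, ← Complex.exp_add, ← neg_add, h2,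
      Complex.exp_zero]
  have hzre : z.re = Real.cos θ := Complex.exp_ofReal_mul_I_re θ
  have hzim : z.im = Real.sin θ := Complex.exp_ofReal_mul_I_im θ
  have hare : (-(z + (θ : ℂ) * Complex.I)).re = -Real.cos θ := by
    simp [hzre]
  have haim : (-(z + (θ : ℂ) * Complex.I)).im = -(θ + Real.sin θ) := by
    simp [hzim]; ring
  have hexpre : (Complex.exp (-(z + (θ : ℂ) * Complex.I))).re
      = Real.exp (-Real.cos θ) * Real.cos (θ + Real.sin θ) := by
    rw [Complex.exp_re, hare, haim, Real.cos_neg]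
  have hexpim : (Complex.exp (-(z + (θ : ℂ) * Complex.I))).im
      = -(Real.exp (-Real.cos θ) * Real.sin (θ + Real.sin θ)) := by
    rw [Complex.exp_im, hare, haim, Real.sin_neg]
    ring
  have hvre : (bsh x z * Complex.exp (-((θ : ℂ) * Complex.I))).re
      = 1 - x * Real.exp (-Real.cos θ) * Real.cos (θ + Real.sin θ) := by
    rw [hv, Complex.sub_re, Complex.one_re, Complex.re_ofReal_mul, hexpre]
    ring
  have hvim : (bsh x z * Complex.exp (-((θ : ℂ) * Complex.I))).im
      = x * Real.exp (-Real.cos θ) * Real.sin (θ + Real.sin θ) := by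
    rw [hv, Complex.sub_im, Complex.one_im, Complex.im_ofReal_mul, hexpim]
    ring
  have habs_v : ‖bsh x z * Complex.exp (-((θ : ℂ) * Complex.I))‖
      = ‖bsh x z‖ := by
    rw [norm_mul, Complex.norm_exp]
    simp
  calc (1 - x * Real.exp (-Real.cos θ) * Real.cos (θ + Real.sin θ)) ^ 2 +
      (x * Real.exp (-Real.cos θ) * Real.sin (θ + Real.sin θ)) ^ 2
      = (bsh x z * Complex.exp (-((θ : ℂ) * Complex.I))).re ^ 2 +
        (bsh x z * Complex.exp (-((θ : ℂ) * Complex.I))).im ^ 2 := by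
        rw [hvre, hvim]
    _ = ‖bsh x z * Complex.exp (-((θ : ℂ) * Complex.I))‖ ^ 2 := by
        rw [Complex.sq_norm, Complex.normSq_apply]; ring
    _ = ‖bsH x w (circleMap 0 1 θ)‖ ^ 2 := by
        rw [habs_v, hcirc, hstep1]

/-- Burniston–Siewert-type closed-form representation of the principal branch of
Lambert W on `(-1/e, e)`. -/
theorem lambertW_burniston_siewert_log (W : ℝ → ℝ)
    (hW : ∀ x ∈ Set.Ioo (-1 / Real.exp 1) (Real.exp 1), W x * Real.exp (W x) = x)
    (hWgt : ∀ x ∈ Set.Ioo (-1 / Real.exp 1) (Real.exp 1), W x > -1) :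
    ∀ x ∈ Set.Ioo (-1 / Real.exp 1) (Real.exp 1),
      W x = (1 / (2 * π)) * ∫ θ in (0:ℝ)..π,
        Real.log ((1 - x * Real.exp (-Real.cos θ) * Real.cos (θ + Real.sin θ)) ^ 2 +
          (x * Real.exp (-Real.cos θ) * Real.sin (θ + Real.sin θ)) ^ 2) := by
  intro x hx
  obtain ⟨hx1, hx2⟩ := hx
  have hwx : W x * Real.exp (W x) = x := hW x ⟨hx1, hx2⟩
  have hw1 : -1 < W x := hWgt x ⟨hx1, hx2⟩
  set w := W x with hwdef
  by_cases hx0 : x = 0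
  · subst hx0
    have hw0 : w = 0 := by
      rcases mul_eq_zero.mp hwx with h | h
      · exact h
      · exact absurd h (Real.exp_ne_zero w)
    rw [hw0]
    simp [Real.log_one]
  · have hwne : w ≠ 0 := by
      intro h
      apply hx0
      rw [← hwx, h, zero_mul]
    have hw2 : w < 1 := by
      by_contra h
      push_neg at h
      have h1 : Real.exp 1 ≤ Real.exp w := Real.exp_le_exp.mpr h
      have h2 : Real.exp 1 ≤ w * Real.exp w := by
        nlinarith [Real.exp_pos w, Real.exp_pos 1]
      rw [hwx] at h2
      linarith
    have hkey := bs_key hx1 hwx hw1 hw2 hwne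
    have hHne : ∀ θ : ℝ, bsH x w (circleMap 0 1 θ) ≠ 0 := fun θ =>
      bsH_ne_zero hx1 hwx hw1 hw2 _ (by rw [norm_circleMap_zero]; norm_num)
    set p : ℝ → ℝ := fun θ =>
      Real.log ((1 - x * Real.exp (-Real.cos θ) * Real.cos (θ + Real.sin θ)) ^ 2 +
        (x * Real.exp (-Real.cos θ) * Real.sin (θ + Real.sin θ)) ^ 2) with hp
    have hplog : ∀ θ : ℝ, p θ
        = 2 * Real.log (‖bsH x w (circleMap 0 1 θ)‖) := by
      intro θ
      rw [hp]
      simp only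
      rw [bs_pointwise hwx θ, Real.log_pow]
      norm_num
    have hpcont : Continuous p := by
      have hpe : p = fun θ => 2 * Real.log (‖bsH x w (circleMap 0 1 θ)‖) :=
        funext hplog
      rw [hpe]
      apply continuous_const.mul
      rw [continuous_iff_continuousAt]
      intro θ
      apply (Real.continuousAt_log ?_).comp
        ((continuous_norm.comp ((bsH_diff x w).continuous.comp
          (continuous_circleMap 0 1))).continuousAt)
      exact (norm_ne_zero_iff).mpr (hHne θ)
    have hsymm : ∀ θ : ℝ, p (2 * π - θ) = p θ := by
      intro θ
      rw [hp]
      simp only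
      rw [Real.cos_two_pi_sub, Real.sin_two_pi_sub]
      have h1 : 2 * π - θ + -Real.sin θ = 2 * π - (θ + Real.sin θ) := by ring
      rw [h1, Real.cos_two_pi_sub, Real.sin_two_pi_sub]
      ring_nf
    have hcomp : ∫ θ in π..(2 * π), p θ = ∫ θ in (0:ℝ)..π, p θ := by
      have h := intervalIntegral.integral_comp_sub_left (a := (0:ℝ)) (b := π) p (2 * π)
      simp only [hsymm] at h
      have h2 : 2 * π - π = π := by ring
      have h3 : 2 * π - 0 = 2 * π := by ring
      rw [h2, h3] at h
      exact h.symm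
    have hadj : ∫ θ in (0:ℝ)..(2 * π), p θ
        = (∫ θ in (0:ℝ)..π, p θ) + ∫ θ in π..(2 * π), p θ :=
      (intervalIntegral.integral_add_adjacent_intervals
        (hpcont.intervalIntegrable 0 π) (hpcont.intervalIntegrable π (2 * π))).symm
    have hfull : ∫ θ in (0:ℝ)..(2 * π), p θ = 4 * π * w := by
      have he : ∫ θ in (0:ℝ)..(2 * π), p θ
          = ∫ θ in (0:ℝ)..(2 * π), 2 * Real.log (‖bsH x w (circleMap 0 1 θ)‖) := by
        congr 1
        exact funext hplog
      rw [he, intervalIntegral.integral_const_mul, hkey]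
      ring
    have hhalf : ∫ θ in (0:ℝ)..π, p θ = 2 * π * w := by
      rw [hadj, hcomp] at hfull
      linarith
    rw [hhalf]
    have hπ : π ≠ 0 := Real.pi_ne_zero
    field_simp
end

section
/- Let W be the principal branch of the Lambert W function, holomorphic on ℂ \ (-∞, -1/e] with W(z) e^{W(z)} = z. For real t < -1/e, writing W(t) = u + i v with v ∈ (0, π), the derivative of v with respect to t satisfies dv/dt = v / (t * (v^2 + (1 - v * cot v)^2)). -/
open Real

/-- Derivative of the branch-cut parametrization: for `t(v) = -v csc(v) e^{-v cot v}`
on `(0, π)`, one has `dt/dv = t(v) (v² + (1 - v cot v)²) / v`, equivalently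
`dv/dt = v / (t (v² + (1 - v cot v)²))`. -/
theorem branch_cut_param_hasDerivAt (v : ℝ) (hv : v ∈ Set.Ioo 0 π) :
    HasDerivAt (fun w : ℝ => -w * (1 / Real.sin w) * Real.exp (-w * Real.cot w))
      ((-v * (1 / Real.sin v) * Real.exp (-v * Real.cot v)) *
        (v ^ 2 + (1 - v * Real.cot v) ^ 2) / v) v := by
  have hs : Real.sin v ≠ 0 := ne_of_gt (Real.sin_pos_of_pos_of_lt_pi hv.1 hv.2)
  have hv0 : v ≠ 0 := ne_of_gt hv.1
  have key : (fun w : ℝ => -w * (1 / Real.sin w) * Real.exp (-w * Real.cot w))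
      = fun w : ℝ => -w * (Real.sin w)⁻¹ * Real.exp (-(w * (Real.cos w / Real.sin w))) := by
    funext w
    rw [Real.cot_eq_cos_div_sin, one_div]
    ring_nf
  rw [key]
  have h1 : HasDerivAt (fun w : ℝ => -(w * (Real.cos w / Real.sin w)))
      (-(1 * (Real.cos v / Real.sin v) +
        v * ((-Real.sin v * Real.sin v - Real.cos v * Real.cos v) / Real.sin v ^ 2))) v :=
    (((hasDerivAt_id v).mul ((Real.hasDerivAt_cos v).div (Real.hasDerivAt_sin v) hs))).neg
  have h2 := h1.exp
  have h3 : HasDerivAt (fun w : ℝ => -w * (Real.sin w)⁻¹)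
      ((-1) * (Real.sin v)⁻¹ + (-v) * (-Real.cos v / Real.sin v ^ 2)) v :=
    ((hasDerivAt_id v).neg.mul ((Real.hasDerivAt_sin v).inv hs))
  have h4 := h3.mul h2
  refine h4.congr_deriv ?_
  rw [Real.cot_eq_cos_div_sin]
  field_simp
  ring_nf
end
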